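/- arXiv:1601.02205 — 4 statements merged into one kernel-verified Lean document; each statement's English description precedes it below -/
import Mathlib

section
/- Suppose the left shift σ is measure-preserving and ergodic with respect to P, and that ∫ log A_1 dP < ∞. Then for P-almost every ω, lim_{n→∞} (1/n)·log Q_n(ω) = −∫ log X dP. -/
open Filter MeasureTheory Real Topology

instance : MeasurableSpace ℕ+ := ⊤

/-- `cfP a n` is the continued fraction numerator `P_{n-1}` of the sequence
`a 1, a 2, …` (so `cfP a 0 = P_{-1} = 1`, `cfP a 1 = P_0 = 0`, and
`P_n = a_n P_{n-1} + P_{n-2}` for `n ≥ 1`). -/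
def cfP (a : ℕ → ℕ) : ℕ → ℤ
  | 0 => 1
  | 1 => 0
  | n + 2 => (a (n + 1) : ℤ) * cfP a (n + 1) + cfP a n

/-- `cfQ a n` is the continued fraction denominator `Q_{n-1}` of the sequence
`a 1, a 2, …` (so `cfQ a 0 = Q_{-1} = 0`, `cfQ a 1 = Q_0 = 1`, and
`Q_n = a_n Q_{n-1} + Q_{n-2}` for `n ≥ 1`). -/
def cfQ (a : ℕ → ℕ) : ℕ → ℤ
  | 0 => 0
  | 1 => 1
  | n + 2 => (a (n + 1) : ℤ) * cfQ a (n + 1) + cfQ a n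

/-- The `n`-th convergent `P_n / Q_n = [a_1, …, a_n]`. -/
noncomputable def cfConv (a : ℕ → ℕ) (n : ℕ) : ℝ :=
  (cfP a (n + 1) : ℝ) / (cfQ a (n + 1) : ℝ)

/-- The value `[a_1, a_2, …]` of the infinite continued fraction, as the limit
of the convergents. -/
noncomputable def cfVal (a : ℕ → ℕ) : ℝ := limUnder atTop (cfConv a)

/-- The left shift on `{1,2,3,…}^ℕ` (coordinate `n-1` of `ω` is `A_n(ω)`). -/
def shiftS : (ℕ → ℕ+) → (ℕ → ℕ+) := fun ω n => ω (n + 1)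

/-- `Xtail ω k = X_k(ω) = [A_k(ω), A_{k+1}(ω), …]` for `k ≥ 1`, where
`A_n(ω) = ω (n-1)`. -/
noncomputable def Xtail (ω : ℕ → ℕ+) (k : ℕ) : ℝ :=
  cfVal (fun i => (ω (i + k - 2) : ℕ))

/-- `Qent ω n = Q_n(ω)`, the denominator of the convergent `[A_1(ω), …, A_n(ω)]`. -/
def Qent (ω : ℕ → ℕ+) (n : ℕ) : ℤ := cfQ (fun i => (ω (i - 1) : ℕ)) (n + 1)

namespace RandomLevy



/-- the shift on coefficient sequences -/
def sh (a : ℕ → ℕ) : ℕ → ℕ := fun i => a (i + 1)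

def Valid (a : ℕ → ℕ) : Prop := ∀ i : ℕ, 1 ≤ a (i + 1)

lemma Valid.sh {a : ℕ → ℕ} (ha : Valid a) : Valid (sh a) := fun i => ha (i + 1)

lemma two_step {C : ℕ → Prop} (h0 : C 0) (h1 : C 1)
    (hs : ∀ n, C n → C (n + 1) → C (n + 2)) : ∀ n, C n := by
  have key : ∀ n, C n ∧ C (n + 1) := by
    intro n
    induction n with
    | zero => exact ⟨h0, h1⟩
    | succ k ih => exact ⟨ih.2, hs k ih.1 ih.2⟩
  exact fun n => (key n).1

section basic

variable {a : ℕ → ℕ}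

lemma cfP_nonneg : ∀ n, 0 ≤ cfP a n := by
  refine two_step (by simp [cfP]) (by simp [cfP]) (fun n h1 h2 => ?_)
  show 0 ≤ (a (n + 1) : ℤ) * cfP a (n + 1) + cfP a n
  positivity

lemma cfQ_nonneg : ∀ n, 0 ≤ cfQ a n := by
  refine two_step (by simp [cfQ]) (by simp [cfQ]) (fun n h1 h2 => ?_)
  show 0 ≤ (a (n + 1) : ℤ) * cfQ a (n + 1) + cfQ a n
  positivity

lemma cfQ_pos (ha : Valid a) : ∀ n, 0 < cfQ a (n + 1) := by
  refine two_step (by simp [cfQ]) ?_ (fun n h1 h2 => ?_)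
  · show (0 : ℤ) < (a 1 : ℤ) * 1 + 0
    have h : (1 : ℤ) ≤ (a 1 : ℤ) := by exact_mod_cast ha 0
    linarith
  · show 0 < (a (n + 2) : ℤ) * cfQ a (n + 2) + cfQ a (n + 1)
    have h3 : (1 : ℤ) ≤ (a (n + 2) : ℤ) := by exact_mod_cast ha (n + 1)
    nlinarith

lemma cfQ_mono (ha : Valid a) (n : ℕ) : cfQ a n ≤ cfQ a (n + 1) := by
  cases n with
  | zero => simp [cfQ]
  | succ m =>
    show cfQ a (m + 1) ≤ (a (m + 1) : ℤ) * cfQ a (m + 1) + cfQ a m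
    have h1 : (1 : ℤ) ≤ (a (m + 1) : ℤ) := by exact_mod_cast ha m
    have h2 := cfQ_nonneg (a := a) m
    have h3 := (cfQ_pos ha m).le
    nlinarith

lemma cfP_le_cfQ (ha : Valid a) : ∀ n, cfP a (n + 1) ≤ cfQ a (n + 1) := by
  refine two_step (by simp [cfP, cfQ]) ?_ (fun n h1 h2 => ?_)
  · show (a 1 : ℤ) * 0 + 1 ≤ (a 1 : ℤ) * 1 + 0
    have : (1 : ℤ) ≤ (a 1 : ℤ) := by exact_mod_cast ha 0
    linarith
  · show (a (n + 2) : ℤ) * cfP a (n + 2) + cfP a (n + 1) ≤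
      (a (n + 2) : ℤ) * cfQ a (n + 2) + cfQ a (n + 1)
    have h3 : (0 : ℤ) ≤ (a (n + 2) : ℤ) := by positivity
    nlinarith

lemma cf_det : ∀ n, cfP a (n + 1) * cfQ a n - cfP a n * cfQ a (n + 1) = (-1) ^ (n + 1) := by
  intro n
  induction n with
  | zero => simp [cfP, cfQ]
  | succ m ih =>
    have e1 : cfP a (m + 2) = (a (m + 1) : ℤ) * cfP a (m + 1) + cfP a m := rfl
    have e2 : cfQ a (m + 2) = (a (m + 1) : ℤ) * cfQ a (m + 1) + cfQ a m := rfl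
    rw [e1, e2]
    have : (-1 : ℤ) ^ (m + 2) = -(-1) ^ (m + 1) := by ring
    rw [this, ← ih]
    ring

lemma cfQ_growth (ha : Valid a) : ∀ n, (2 : ℤ) ^ n ≤ cfQ a (n + 1) * cfQ a (n + 2) := by
  intro n
  induction n with
  | zero =>
    show (2 : ℤ) ^ 0 ≤ 1 * ((a 1 : ℤ) * 1 + 0)
    have : (1 : ℤ) ≤ (a 1 : ℤ) := by exact_mod_cast ha 0
    simpa using this
  | succ m ih =>
    have e3 : cfQ a (m + 3) = (a (m + 2) : ℤ) * cfQ a (m + 2) + cfQ a (m + 1) := rfl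
    have h1 : (1 : ℤ) ≤ (a (m + 2) : ℤ) := by exact_mod_cast ha (m + 1)
    have h2 := cfQ_pos ha m
    have h3 := cfQ_pos ha (m + 1)
    have h4 := cfQ_mono ha (m + 1)
    calc (2 : ℤ) ^ (m + 1) = 2 * 2 ^ m := by ring
    _ ≤ 2 * (cfQ a (m + 1) * cfQ a (m + 2)) := by linarith
    _ ≤ cfQ a (m + 2) * cfQ a (m + 3) := by
        rw [e3]
        have h5 : cfQ a (m + 1) * cfQ a (m + 2) ≤ cfQ a (m + 2) * cfQ a (m + 2) :=
          mul_le_mul_of_nonneg_right h4 h3.le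
        have h6 : cfQ a (m + 2) * cfQ a (m + 2) ≤
            (a (m + 2) : ℤ) * cfQ a (m + 2) * cfQ a (m + 2) := by nlinarith
        nlinarith

end basic

section conv

variable {a : ℕ → ℕ}

lemma cfConv_nonneg (ha : Valid a) (n : ℕ) : 0 ≤ cfConv a n := by
  have h1 : (0 : ℝ) ≤ (cfP a (n + 1) : ℝ) := by exact_mod_cast cfP_nonneg (n + 1)
  have h2 : (0 : ℝ) ≤ (cfQ a (n + 1) : ℝ) := by exact_mod_cast cfQ_nonneg (n + 1)
  exact div_nonneg h1 h2

lemma cfConv_le_one (ha : Valid a) (n : ℕ) : cfConv a n ≤ 1 := by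
  have h2 : (0 : ℝ) < (cfQ a (n + 1) : ℝ) := by exact_mod_cast cfQ_pos ha n
  rw [cfConv, div_le_one h2]
  exact_mod_cast cfP_le_cfQ ha n

lemma cfConv_diff (ha : Valid a) (n : ℕ) :
    dist (cfConv a n) (cfConv a (n + 1)) ≤ 1 * (1 / 2) ^ n := by
  have hq1 : (0 : ℝ) < (cfQ a (n + 1) : ℝ) := by exact_mod_cast cfQ_pos ha n
  have hq2 : (0 : ℝ) < (cfQ a (n + 2) : ℝ) := by exact_mod_cast cfQ_pos ha (n + 1)
  have hdet : (cfP a (n + 2) : ℝ) * (cfQ a (n + 1) : ℝ)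
      - (cfP a (n + 1) : ℝ) * (cfQ a (n + 2) : ℝ) = (-1 : ℝ) ^ (n + 2) := by
    exact_mod_cast congrArg (fun z : ℤ => (z : ℝ)) (cf_det (a := a) (n + 1))
  have hgrow : (2 : ℝ) ^ n ≤ (cfQ a (n + 1) : ℝ) * (cfQ a (n + 2) : ℝ) := by
    exact_mod_cast cfQ_growth ha n
  rw [Real.dist_eq, cfConv, cfConv]
  rw [div_sub_div _ _ (ne_of_gt hq1) (ne_of_gt hq2), abs_div]
  have hnum : |(cfP a (n + 1) : ℝ) * (cfQ a (n + 2) : ℝ)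
      - (cfQ a (n + 1) : ℝ) * (cfP a (n + 2) : ℝ)| = 1 := by
    have : (cfP a (n + 1) : ℝ) * (cfQ a (n + 2) : ℝ)
        - (cfQ a (n + 1) : ℝ) * (cfP a (n + 2) : ℝ) = -(-1 : ℝ) ^ (n + 2) := by
      linarith [hdet]
    rw [this, abs_neg, abs_pow, abs_neg, abs_one, one_pow]
  rw [hnum]
  have hd : (0 : ℝ) < (cfQ a (n + 1) : ℝ) * (cfQ a (n + 2) : ℝ) := by positivity
  rw [abs_of_pos hd, one_mul, div_pow, one_pow, one_div, one_div]
  exact inv_anti₀ (by positivity) hgrow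

lemma cfConv_cauchy (ha : Valid a) : CauchySeq (cfConv a) :=
  cauchySeq_of_le_geometric (1 / 2) 1 (by norm_num) (cfConv_diff ha)

lemma cfVal_tendsto (ha : Valid a) : Tendsto (cfConv a) atTop (𝓝 (cfVal a)) := by
  obtain ⟨x, hx⟩ := cauchySeq_tendsto_of_complete (cfConv_cauchy ha)
  have : cfVal a = x := hx.limUnder_eq
  rw [this]; exact hx

lemma cfVal_nonneg (ha : Valid a) : 0 ≤ cfVal a :=
  le_of_tendsto_of_tendsto' tendsto_const_nhds (cfVal_tendsto ha) (cfConv_nonneg ha)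

lemma cfVal_le_one (ha : Valid a) : cfVal a ≤ 1 :=
  le_of_tendsto_of_tendsto' (cfVal_tendsto ha) tendsto_const_nhds (cfConv_le_one ha)

lemma cf_shift (n : ℕ) : cfP a (n + 1) = cfQ (sh a) n ∧
    cfQ a (n + 1) = (a 1 : ℤ) * cfQ (sh a) n + cfP (sh a) n := by
  induction n using two_step with
  | h0 => simp [cfP, cfQ]
  | h1 =>
    constructor
    · show (a 1 : ℤ) * 0 + 1 = 1; ring
    · show (a 1 : ℤ) * 1 + 0 = (a 1 : ℤ) * 1 + 0; rfl
  | hs n ih1 ih2 =>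
    have hsh : (RandomLevy.sh a) (n + 1) = a (n + 2) := rfl
    constructor
    · show (a (n + 2) : ℤ) * cfP a (n + 2) + cfP a (n + 1) = cfQ (sh a) (n + 2)
      rw [ih2.1, ih1.1]
      show _ = ((RandomLevy.sh a) (n + 1) : ℤ) * cfQ (sh a) (n + 1) + cfQ (sh a) n
      rw [hsh]
    · show (a (n + 2) : ℤ) * cfQ a (n + 2) + cfQ a (n + 1) =
        (a 1 : ℤ) * cfQ (sh a) (n + 2) + cfP (sh a) (n + 2)
      rw [ih2.2, ih1.2]
      show _ = (a 1 : ℤ) * (((RandomLevy.sh a) (n + 1) : ℤ) * cfQ (sh a) (n + 1) + cfQ (sh a) n)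
          + (((RandomLevy.sh a) (n + 1) : ℤ) * cfP (sh a) (n + 1) + cfP (sh a) n)
      rw [hsh]
      ring

lemma cfConv_shift (ha : Valid a) (n : ℕ) :
    cfConv a (n + 1) = 1 / ((a 1 : ℝ) + cfConv (sh a) n) := by
  have hq : (0 : ℝ) < (cfQ (sh a) (n + 1) : ℝ) := by exact_mod_cast cfQ_pos ha.sh n
  have hp : (0 : ℝ) ≤ (cfP (sh a) (n + 1) : ℝ) := by exact_mod_cast cfP_nonneg (n + 1)
  have ha1 : (1 : ℝ) ≤ (a 1 : ℝ) := by exact_mod_cast ha 0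
  have h1 : (cfP a (n + 2) : ℝ) = (cfQ (sh a) (n + 1) : ℝ) := by
    exact_mod_cast congrArg (fun z : ℤ => (z : ℝ)) (cf_shift (a := a) (n + 1)).1
  have h2 : (cfQ a (n + 2) : ℝ) = (a 1 : ℝ) * (cfQ (sh a) (n + 1) : ℝ) + (cfP (sh a) (n + 1) : ℝ) := by
    exact_mod_cast congrArg (fun z : ℤ => (z : ℝ)) (cf_shift (a := a) (n + 1)).2
  rw [cfConv, cfConv, h1, h2]
  have hden : (0 : ℝ) < (a 1 : ℝ) + (cfP (sh a) (n + 1) : ℝ) / (cfQ (sh a) (n + 1) : ℝ) := by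
    have : (0 : ℝ) ≤ (cfP (sh a) (n + 1) : ℝ) / (cfQ (sh a) (n + 1) : ℝ) := div_nonneg hp hq.le
    linarith
  field_simp

lemma cfVal_shift (ha : Valid a) : cfVal a = 1 / ((a 1 : ℝ) + cfVal (sh a)) := by
  have ha1 : (1 : ℝ) ≤ (a 1 : ℝ) := by exact_mod_cast ha 0
  have hy : 0 ≤ cfVal (sh a) := cfVal_nonneg ha.sh
  have hden : (0 : ℝ) < (a 1 : ℝ) + cfVal (sh a) := by linarith
  have h1 : Tendsto (fun n => cfConv a (n + 1)) atTop (𝓝 (cfVal a)) :=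
    (cfVal_tendsto ha).comp (tendsto_add_atTop_nat 1)
  have h2 : Tendsto (fun n => 1 / ((a 1 : ℝ) + cfConv (sh a) n)) atTop
      (𝓝 (1 / ((a 1 : ℝ) + cfVal (sh a)))) := by
    exact tendsto_const_nhds.div (tendsto_const_nhds.add (cfVal_tendsto ha.sh)) (ne_of_gt hden)
  have h3 : (fun n => cfConv a (n + 1)) = fun n => 1 / ((a 1 : ℝ) + cfConv (sh a) n) := by
    funext n; exact cfConv_shift ha n
  rw [h3] at h1
  exact tendsto_nhds_unique h1 h2

lemma cfVal_pos (ha : Valid a) : 0 < cfVal a := by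
  rw [cfVal_shift ha]
  have ha1 : (1 : ℝ) ≤ (a 1 : ℝ) := by exact_mod_cast ha 0
  have hy : 0 ≤ cfVal (sh a) := cfVal_nonneg ha.sh
  positivity

lemma cfVal_lt_one (ha : Valid a) : cfVal a < 1 := by
  rw [cfVal_shift ha]
  have ha1 : (1 : ℝ) ≤ (a 1 : ℝ) := by exact_mod_cast ha 0
  have hy : 0 < cfVal (sh a) := cfVal_pos ha.sh
  rw [div_lt_one (by linarith)]
  linarith

lemma one_div_lt_cfVal (ha : Valid a) : 1 / ((a 1 : ℝ) + 1) < cfVal a := by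
  rw [cfVal_shift ha]
  have ha1 : (1 : ℝ) ≤ (a 1 : ℝ) := by exact_mod_cast ha 0
  have hy : cfVal (sh a) < 1 := cfVal_lt_one ha.sh
  have hy0 : 0 ≤ cfVal (sh a) := cfVal_nonneg ha.sh
  apply one_div_lt_one_div_of_lt (by linarith) (by linarith)

end conv

section prod

variable {a : ℕ → ℕ}

lemma sh_iterate (a : ℕ → ℕ) : ∀ k, RandomLevy.sh^[k] a = fun i => a (i + k) := by
  intro k
  induction k with
  | zero => funext i; simp
  | succ m ih =>
    rw [Function.iterate_succ_apply', ih]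
    funext i
    show (fun i => a (i + m)) (i + 1) = a (i + (m + 1))
    simp only []
    ring_nf

lemma Valid.iterate (ha : Valid a) (k : ℕ) : Valid (RandomLevy.sh^[k] a) := by
  rw [sh_iterate]
  intro i
  show 1 ≤ a (i + 1 + k)
  have : i + 1 + k = (i + k) + 1 := by ring
  rw [this]
  exact ha (i + k)

lemma prod_cfVal (ha : Valid a) : ∀ n,
    (∏ k ∈ Finset.range n, cfVal (RandomLevy.sh^[k] a)) =
      1 / ((cfQ a (n + 1) : ℝ) + (cfQ a n : ℝ) * cfVal (RandomLevy.sh^[n] a)) := by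
  intro n
  induction n with
  | zero => simp [cfQ]
  | succ m ih =>
    rw [Finset.prod_range_succ, ih]
    set X := cfVal (RandomLevy.sh^[m] a) with hX
    set Y := cfVal (RandomLevy.sh^[m + 1] a) with hY
    have hb : Valid (RandomLevy.sh^[m] a) := ha.iterate m
    have hXpos : 0 < X := cfVal_pos hb
    have hYpos : 0 < Y := cfVal_pos (ha.iterate (m + 1))
    have hb1 : (RandomLevy.sh^[m] a) 1 = a (m + 1) := by
      rw [sh_iterate]
      show a (1 + m) = a (m + 1)
      ring_nf
    have hXeq : X = 1 / ((a (m + 1) : ℝ) + Y) := by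
      rw [hX, cfVal_shift hb, hb1]
      congr 2
      rw [hY, ← Function.iterate_succ_apply' RandomLevy.sh m a]
    have hq1 : (0 : ℝ) < (cfQ a (m + 1) : ℝ) := by exact_mod_cast cfQ_pos ha m
    have hq0 : (0 : ℝ) ≤ (cfQ a m : ℝ) := by exact_mod_cast cfQ_nonneg m
    have ha1 : (1 : ℝ) ≤ (a (m + 1) : ℝ) := by exact_mod_cast ha m
    have hrec : (cfQ a (m + 2) : ℝ) = (a (m + 1) : ℝ) * (cfQ a (m + 1) : ℝ) + (cfQ a m : ℝ) := by
      exact_mod_cast congrArg (fun z : ℤ => (z : ℝ)) (rfl : cfQ a (m + 2) = _)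
    rw [hXeq, hrec]
    have hden1 : (0 : ℝ) < (a (m + 1) : ℝ) + Y := by linarith
    have hden2 : (0 : ℝ) < (cfQ a (m + 1) : ℝ) + (cfQ a m : ℝ) * (1 / ((a (m + 1) : ℝ) + Y)) := by
      have : 0 ≤ (cfQ a m : ℝ) * (1 / ((a (m + 1) : ℝ) + Y)) := by positivity
      linarith
    field_simp
    ring

lemma log_Q_bound (ha : Valid a) (n : ℕ) :
    |Real.log (cfQ a (n + 1) : ℝ) +
      ∑ k ∈ Finset.range n, Real.log (cfVal (RandomLevy.sh^[k] a))| ≤ Real.log 2 := by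
  have hsum : ∑ k ∈ Finset.range n, Real.log (cfVal (RandomLevy.sh^[k] a)) =
      Real.log (∏ k ∈ Finset.range n, cfVal (RandomLevy.sh^[k] a)) := by
    rw [Real.log_prod]
    intro k _
    exact ne_of_gt (cfVal_pos (ha.iterate k))
  set X := cfVal (RandomLevy.sh^[n] a) with hXdef
  have hX0 : 0 < X := cfVal_pos (ha.iterate n)
  have hX1 : X ≤ 1 := cfVal_le_one (ha.iterate n)
  have hq1 : (1 : ℝ) ≤ (cfQ a (n + 1) : ℝ) := by
    have := cfQ_pos ha n; exact_mod_cast this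
  have hq0 : (0 : ℝ) ≤ (cfQ a n : ℝ) := by exact_mod_cast cfQ_nonneg n
  have hqm : (cfQ a n : ℝ) ≤ (cfQ a (n + 1) : ℝ) := by exact_mod_cast cfQ_mono ha n
  set D := (cfQ a (n + 1) : ℝ) + (cfQ a n : ℝ) * X with hDdef
  have hD1 : (cfQ a (n + 1) : ℝ) ≤ D := by
    have : 0 ≤ (cfQ a n : ℝ) * X := by positivity
    linarith
  have hD2 : D ≤ 2 * (cfQ a (n + 1) : ℝ) := by
    have : (cfQ a n : ℝ) * X ≤ (cfQ a (n + 1) : ℝ) := by nlinarith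
    linarith
  have hDpos : 0 < D := by linarith
  rw [hsum, prod_cfVal ha n, ← hXdef, ← hDdef, Real.log_div one_ne_zero (ne_of_gt hDpos),
    Real.log_one]
  have hl1 : Real.log (cfQ a (n + 1) : ℝ) ≤ Real.log D := Real.log_le_log (by linarith) hD1
  have hl2 : Real.log D ≤ Real.log 2 + Real.log (cfQ a (n + 1) : ℝ) := by
    have := Real.log_le_log hDpos hD2
    rwa [Real.log_mul two_ne_zero (by linarith)] at this
  rw [abs_le]
  constructor <;> [skip; skip] <;> linarith [Real.log_nonneg (by norm_num : (1:ℝ) ≤ 2)]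

end prod

variable {α : Type*} [MeasurableSpace α] {μ : Measure α} [IsProbabilityMeasure μ]
  {T : α → α} {g : α → ℝ}

/-- Birkhoff sums. -/
noncomputable def bS (T : α → α) (g : α → ℝ) (n : ℕ) (x : α) : ℝ :=
  ∑ i ∈ Finset.range n, g (T^[i] x)

lemma bS_zero (x : α) : bS T g 0 x = 0 := by simp [bS]

lemma bS_succ (n : ℕ) (x : α) : bS T g (n + 1) x = g x + bS T g n (T x) := by
  rw [bS, Finset.sum_range_succ']
  simp only [Function.iterate_succ_apply, Function.iterate_zero_apply]
  rw [add_comm]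
  rfl

lemma bS_measurable (hT : Measurable T) (hmg : Measurable g) (n : ℕ) :
    Measurable (bS T g n) :=
  Finset.measurable_sum _ fun i _ => hmg.comp (hT.iterate i)

lemma integrable_comp_T (hT : MeasurePreserving T μ μ) {φ : α → ℝ}
    (hφm : AEStronglyMeasurable φ μ) (hφ : Integrable φ μ) :
    Integrable (fun x => φ (T x)) μ := by
  rw [← Function.comp_def]
  refine (integrable_map_measure (by rwa [hT.map_eq]) hT.measurable.aemeasurable).1 ?_
  rwa [hT.map_eq]

lemma integral_comp_T (hT : MeasurePreserving T μ μ) {φ : α → ℝ}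
    (hφm : AEStronglyMeasurable φ μ) :
    ∫ x, φ (T x) ∂μ = ∫ x, φ x ∂μ := by
  calc ∫ x, φ (T x) ∂μ = ∫ y, φ y ∂(Measure.map T μ) :=
        (integral_map hT.measurable.aemeasurable (by rwa [hT.map_eq])).symm
  _ = ∫ x, φ x ∂μ := by rw [hT.map_eq]

lemma bS_integrable (hT : MeasurePreserving T μ μ) (hg : Integrable g μ) (n : ℕ) :
    Integrable (bS T g n) μ := by
  refine integrable_finset_sum _ fun i _ => ?_
  have : MeasurePreserving (T^[i]) μ μ := hT.iterate i
  rw [← Function.comp_def]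
  refine (integrable_map_measure (by rw [this.map_eq]; exact hg.aestronglyMeasurable)
    this.measurable.aemeasurable).1 ?_
  rwa [this.map_eq]

/-- running maximum `max (0, S_1, …, S_N)` -/
noncomputable def bM (T : α → α) (g : α → ℝ) : ℕ → α → ℝ
  | 0 => fun _ => 0
  | N + 1 => fun x => max (bM T g N x) (bS T g (N + 1) x)

lemma bM_nonneg (N : ℕ) (x : α) : 0 ≤ bM T g N x := by
  induction N with
  | zero => simp [bM]
  | succ m ih => exact le_trans ih (le_max_left _ _)

lemma bM_mono (N : ℕ) (x : α) : bM T g N x ≤ bM T g (N + 1) x := le_max_left _ _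

lemma bS_le_bM {k N : ℕ} (h1 : k ≤ N) (x : α) : bS T g k x ≤ bM T g N x := by
  induction N with
  | zero =>
    have : k = 0 := Nat.le_zero.1 h1
    simp [this, bS_zero, bM]
  | succ m ih =>
    rcases Nat.lt_or_ge k (m + 1) with h | h
    · exact le_trans (ih (Nat.lt_succ_iff.1 h)) (le_max_left _ _)
    · have : k = m + 1 := le_antisymm h1 h
      rw [this]
      exact le_max_right _ _
lemma bM_cases (N : ℕ) (x : α) :
    bM T g N x = 0 ∨ ∃ k, 1 ≤ k ∧ k ≤ N ∧ bM T g N x = bS T g k x := by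
  induction N with
  | zero => exact Or.inl rfl
  | succ m ih =>
    rcases le_total (bM T g m x) (bS T g (m + 1) x) with h | h
    · exact Or.inr ⟨m + 1, Nat.succ_le_succ (Nat.zero_le m), le_refl _, max_eq_right h⟩
    · have : bM T g (m + 1) x = bM T g m x := max_eq_left h
      rcases ih with h0 | ⟨k, hk1, hk2, hk3⟩
      · exact Or.inl (this.trans h0)
      · exact Or.inr ⟨k, hk1, hk2.trans (Nat.le_succ m), this.trans hk3⟩

lemma bM_measurable (hT : Measurable T) (hmg : Measurable g) (N : ℕ) :
    Measurable (bM T g N) := by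
  induction N with
  | zero => exact measurable_const
  | succ m ih => exact ih.max (bS_measurable hT hmg (m + 1))

lemma bM_integrable (hT : MeasurePreserving T μ μ) (hg : Integrable g μ) (N : ℕ) :
    Integrable (bM T g N) μ := by
  induction N with
  | zero => exact integrable_const 0
  | succ m ih => exact ih.sup (bS_integrable hT hg (m + 1))

/-- The maximal ergodic theorem (Garsia's proof). -/
lemma maximal_ergodic (hT : MeasurePreserving T μ μ) (hmg : Measurable g)
    (hg : Integrable g μ) :
    0 ≤ ∫ x in {x | ∃ n, 0 < bS T g (n + 1) x}, g x ∂μ := by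
  set E : ℕ → Set α := fun N => {x | 0 < bM T g N x} with hE
  have hEmeas : ∀ N, MeasurableSet (E N) :=
    fun N => measurableSet_lt measurable_const (bM_measurable hT.measurable hmg N)
  have hEmono : Monotone E := by
    intro i j hij x hx
    have : bM T g i x ≤ bM T g j x := by
      clear hx
      induction j with
      | zero => have : i = 0 := Nat.le_zero.1 hij; simp [this]
      | succ m ih =>
        rcases Nat.lt_or_ge i (m + 1) with h | h
        · exact le_trans (ih (Nat.lt_succ_iff.1 h)) (bM_mono m x)
        · have : i = m + 1 := le_antisymm hij h
          simp [this]
    exact lt_of_lt_of_le hx this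
  -- key pointwise inequality on E N
  have hkey : ∀ N, ∀ x ∈ E N, bM T g N x - bM T g N (T x) ≤ g x := by
    intro N x hx
    rcases bM_cases (T := T) (g := g) N x with h0 | ⟨k, hk1, hk2, hk3⟩
    · exact absurd h0 (ne_of_gt hx)
    · obtain ⟨m, rfl⟩ := Nat.exists_eq_add_of_le hk1
      rw [hk3]
      have : bS T g (1 + m) x = g x + bS T g m (T x) := by
        rw [add_comm 1 m]; exact bS_succ m x
      rw [this]
      have h2 : bS T g m (T x) ≤ bM T g N (T x) := bS_le_bM (le_trans (by omega) hk2) (T x)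
      linarith
  -- integral inequality for each N
  have hstep : ∀ N, 0 ≤ ∫ x in E N, g x ∂μ := by
    intro N
    have hMint := bM_integrable hT hg N
    have hMTint : Integrable (fun x => bM T g N (T x)) μ :=
      integrable_comp_T hT hMint.aestronglyMeasurable hMint
    have h1 : ∫ x in E N, (bM T g N x - bM T g N (T x)) ∂μ ≤ ∫ x in E N, g x ∂μ := by
      refine setIntegral_mono_on ((hMint.sub hMTint).integrableOn)
        (hg.integrableOn) (hEmeas N) (hkey N)
    have h2 : ∫ x in E N, (bM T g N x - bM T g N (T x)) ∂μ
        = ∫ x in E N, bM T g N x ∂μ - ∫ x in E N, bM T g N (T x) ∂μ :=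
      integral_sub hMint.integrableOn hMTint.integrableOn
    have h3 : ∫ x in E N, bM T g N x ∂μ = ∫ x, bM T g N x ∂μ := by
      rw [← integral_add_compl (hEmeas N) hMint]
      have : ∫ x in (E N)ᶜ, bM T g N x ∂μ = 0 := by
        refine setIntegral_eq_zero_of_forall_eq_zero fun x hx => ?_
        have h4 : ¬(0 < bM T g N x) := hx
        have h5 := bM_nonneg (T := T) (g := g) N x
        linarith
      rw [this, add_zero]
    have h4 : ∫ x in E N, bM T g N (T x) ∂μ ≤ ∫ x, bM T g N (T x) ∂μ :=
      setIntegral_le_integral hMTint (Eventually.of_forall fun x => bM_nonneg N (T x))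
    have h5 : ∫ x, bM T g N (T x) ∂μ = ∫ x, bM T g N x ∂μ :=
      integral_comp_T hT hMint.aestronglyMeasurable
    linarith
  -- pass to the limit
  have hunion : {x | ∃ n, 0 < bS T g (n + 1) x} = ⋃ N, E N := by
    ext x
    simp only [Set.mem_setOf_eq, Set.mem_iUnion]
    constructor
    · rintro ⟨n, hn⟩
      exact ⟨n + 1, lt_of_lt_of_le hn (bS_le_bM (le_refl _) x)⟩
    · rintro ⟨N, hN⟩
      rcases bM_cases (T := T) (g := g) N x with h0 | ⟨k, hk1, hk2, hk3⟩
      · exact absurd h0 (ne_of_gt hN)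
      · obtain ⟨m, rfl⟩ := Nat.exists_eq_add_of_le hk1
        have hN' : 0 < bM T g N x := hN
        rw [hk3] at hN'
        exact ⟨m, by rwa [add_comm 1 m] at hN'⟩
  have hlim := tendsto_setIntegral_of_monotone hEmeas hEmono
    (hg.integrableOn : IntegrableOn g (⋃ N, E N) μ)
  rw [hunion]
  exact ge_of_tendsto' hlim hstep

lemma bS_sub_const (c : ℝ) (n : ℕ) (x : α) :
    bS T (fun y => g y - c) n x = bS T g n x - n * c := by
  rw [bS, bS, Finset.sum_sub_distrib]
  simp [mul_comm]

/-- One-sided Birkhoff bound for ergodic maps. -/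
lemma birkhoff_upper (herg : Ergodic T μ) (hmg : Measurable g)
    (hg : Integrable g μ) {ε : ℝ} (hε : 0 < ε) :
    ∀ᵐ x ∂μ, ∀ᶠ n : ℕ in atTop, bS T g n x ≤ (∫ y, g y ∂μ + ε) * n := by
  have hT : MeasurePreserving T μ μ := herg.toMeasurePreserving
  set I : ℝ := ∫ y, g y ∂μ with hI
  set c0 : ℝ := I + ε / 2 with hc0
  set h : α → ℝ := fun y => g y - c0 with hh
  have hmh : Measurable h := hmg.sub measurable_const
  have hhint : Integrable h μ := hg.sub (integrable_const c0)
  have hinth : ∫ y, h y ∂μ = -(ε / 2) := by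
    have heq : ∫ y, h y ∂μ = I - c0 := by
      rw [hh, integral_sub hg (integrable_const c0), integral_const]
      simp [hI]
    rw [heq, hc0]
    ring
  set B : Set α := {x | ∀ c : ℕ, ∀ N : ℕ, ∃ n, N ≤ n ∧ (c : ℝ) < bS T h n x} with hB
  have hBmeas : MeasurableSet B := by
    have hBeq : B = ⋂ (c : ℕ), ⋂ (N : ℕ), ⋃ (n : ℕ), ⋃ (_ : N ≤ n),
        {x | (c : ℝ) < bS T h n x} := by
      ext x
      simp [hB, Set.mem_iInter, Set.mem_iUnion]
    rw [hBeq]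
    exact MeasurableSet.iInter fun c => MeasurableSet.iInter fun N =>
      MeasurableSet.iUnion fun n => MeasurableSet.iUnion fun _ =>
        measurableSet_lt measurable_const (bS_measurable hT.measurable hmh n)
  have hBinv : T ⁻¹' B = B := by
    ext x
    simp only [Set.mem_preimage, hB, Set.mem_setOf_eq]
    constructor
    · intro hx c N
      obtain ⟨n, hn1, hn2⟩ := hx (Nat.ceil ((c : ℝ) - h x)) N
      refine ⟨n + 1, le_trans hn1 (Nat.le_succ n), ?_⟩
      rw [bS_succ]
      have := Nat.le_ceil ((c : ℝ) - h x)
      linarith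
    · intro hx c N
      obtain ⟨n, hn1, hn2⟩ := hx (Nat.ceil ((c : ℝ) + h x)) (N + 1)
      obtain ⟨m, rfl⟩ : ∃ m, n = m + 1 := ⟨n - 1, by omega⟩
      refine ⟨m, by omega, ?_⟩
      rw [bS_succ] at hn2
      have := Nat.le_ceil ((c : ℝ) + h x)
      linarith
  rcases herg.toPreErgodic.ae_empty_or_univ hBmeas hBinv with hB0 | hB1
  · -- μ B = 0 : good case
    have hBnull : μ B = 0 := by
      have := measure_congr hB0
      simpa using this
    rw [ae_iff]
    refine measure_mono_null (fun x hx => ?_) hBnull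
    simp only [Set.mem_setOf_eq, not_eventually, not_le] at hx
    show ∀ c : ℕ, ∀ N : ℕ, ∃ n, N ≤ n ∧ (c : ℝ) < bS T h n x
    intro c N
    obtain ⟨n, hn1, hn3⟩ := frequently_atTop.1 hx (max N (Nat.ceil ((c : ℝ) * (2 / ε))))
    have hnN : N ≤ n := le_trans (le_max_left _ _) hn1
    have h5 : (c : ℝ) * (2 / ε) ≤ n := by
      refine le_trans (Nat.le_ceil _) ?_
      exact_mod_cast le_trans (le_max_right _ _) hn1
    have hc2 : (c : ℝ) ≤ (ε / 2) * n := by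
      have hcc : (c : ℝ) = (c : ℝ) * (2 / ε) * (ε / 2) := by field_simp
      calc (c : ℝ) = (c : ℝ) * (2 / ε) * (ε / 2) := hcc
      _ ≤ (n : ℝ) * (ε / 2) := mul_le_mul_of_nonneg_right h5 (by positivity)
      _ = (ε / 2) * n := by ring
    refine ⟨n, hnN, ?_⟩
    have hbs : bS T h n x = bS T g n x - n * c0 := by
      rw [hh]
      exact bS_sub_const c0 n x
    have hexp : (n : ℝ) * c0 = I * n + (ε / 2) * n := by rw [hc0]; ring
    rw [hbs, hexp]
    have hexp2 : (I + ε) * (n : ℝ) = I * n + 2 * (ε / 2 * n) := by ring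
    rw [hexp2] at hn3
    linarith
  · -- μ B = 1 : contradiction with maximal ergodic theorem
    exfalso
    have hBfull : μ B = 1 := by
      have := measure_congr hB1
      simpa using this
    have hmax := maximal_ergodic hT hmh hhint
    set A : Set α := {x | ∃ n, 0 < bS T h (n + 1) x} with hA
    have hAeq : A = ⋃ n, {x | 0 < bS T h (n + 1) x} := by
      ext x
      simp [hA]
    have hAmeas : MeasurableSet A := by
      rw [hAeq]
      exact MeasurableSet.iUnion fun n =>
        measurableSet_lt measurable_const (bS_measurable hT.measurable hmh (n + 1))
    have hBA : B ⊆ A := by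
      intro x hx
      obtain ⟨n, hn1, hn2⟩ := hx 0 1
      obtain ⟨m, rfl⟩ : ∃ m, n = m + 1 := ⟨n - 1, by omega⟩
      refine ⟨m, ?_⟩
      have : ((0 : ℕ) : ℝ) < bS T h (m + 1) x := hn2
      simpa using this
    have hAone : μ A = 1 := by
      refine le_antisymm prob_le_one ?_
      have hmono : μ B ≤ μ A := measure_mono hBA
      rwa [hBfull] at hmono
    have hAcnull : μ Aᶜ = 0 := by
      rw [measure_compl hAmeas (measure_ne_top μ A), hAone, measure_univ]
      simp
    have hhintA : ∫ x in A, h x ∂μ = ∫ x, h x ∂μ := by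
      rw [← integral_add_compl hAmeas hhint]
      have hzero : μ.restrict Aᶜ = 0 := Measure.restrict_eq_zero.2 hAcnull
      rw [hzero]
      simp
    rw [hhintA, hinth] at hmax
    linarith

/-- Birkhoff's pointwise ergodic theorem (ergodic case). -/
lemma birkhoff_ergodic (herg : Ergodic T μ) (hmg : Measurable g) (hg : Integrable g μ) :
    ∀ᵐ x ∂μ, Tendsto (fun n : ℕ => bS T g n x / n) atTop (𝓝 (∫ y, g y ∂μ)) := by
  have hmain : ∀ᵐ x ∂μ, ∀ k : ℕ,
      (∀ᶠ n : ℕ in atTop, bS T g n x ≤ (∫ y, g y ∂μ + 1 / (k + 1)) * n) ∧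
      (∀ᶠ n : ℕ in atTop, bS T (fun y => -g y) n x
        ≤ (∫ y, (fun y => -g y) y ∂μ + 1 / (k + 1)) * n) := by
    rw [ae_all_iff]
    intro k
    have hk : (0:ℝ) < 1 / (k + 1) := by positivity
    exact (birkhoff_upper herg hmg hg hk).and (birkhoff_upper herg hmg.neg hg.neg hk)
  filter_upwards [hmain] with x hx
  rw [Metric.tendsto_atTop]
  intro ε hε
  obtain ⟨k, hk⟩ := exists_nat_one_div_lt hε
  obtain ⟨N1, hN1⟩ := eventually_atTop.1 (hx k).1
  obtain ⟨N2, hN2⟩ := eventually_atTop.1 (hx k).2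
  refine ⟨max (max N1 N2) 1, fun n hn => ?_⟩
  have h1 := hN1 n (le_trans (le_trans (le_max_left _ _) (le_max_left _ _)) hn)
  have h2 := hN2 n (le_trans (le_trans (le_max_right _ _) (le_max_left _ _)) hn)
  have hnpos : (0:ℝ) < n := by
    have : 1 ≤ n := le_trans (le_max_right _ _) hn
    exact_mod_cast this
  have hneg : bS T (fun y => -g y) n x = -bS T g n x := by
    simp [bS]
  have hintneg : ∫ y, (fun y => -g y) y ∂μ = -∫ y, g y ∂μ := by
    simp [integral_neg]
  rw [hneg, hintneg] at h2
  set I : ℝ := ∫ y, g y ∂μ with hI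
  rw [Real.dist_eq]
  have hu : bS T g n x / n ≤ I + 1 / (k + 1) := by
    rw [div_le_iff₀ hnpos]
    exact h1
  have hl : I - 1 / (k + 1) ≤ bS T g n x / n := by
    rw [le_div_iff₀ hnpos]
    nlinarith [h2]
  have hbound : |bS T g n x / n - I| ≤ 1 / (k + 1) := by
    rw [abs_le]
    constructor <;> linarith
  calc |bS T g n x / n - I| ≤ 1 / (k + 1) := hbound
  _ < ε := by exact_mod_cast hk


section glue

/-- the coefficient sequence of `ω`. -/
def aof (ω : ℕ → ℕ+) : ℕ → ℕ := fun i => (ω (i - 1) : ℕ)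

lemma valid_aof (ω : ℕ → ℕ+) : Valid (aof ω) := by
  intro i
  show 1 ≤ (ω (i + 1 - 1) : ℕ)
  exact (ω (i + 1 - 1)).property

lemma cf_tail_eq {a b : ℕ → ℕ} (hab : ∀ i, 1 ≤ i → a i = b i) :
    ∀ n, cfP a n = cfP b n ∧ cfQ a n = cfQ b n := by
  refine two_step (by simp [cfP, cfQ]) (by simp [cfP, cfQ]) (fun n ih1 ih2 => ?_)
  have h : a (n + 1) = b (n + 1) := hab (n + 1) (by omega)
  constructor
  · show (a (n + 1) : ℤ) * cfP a (n + 1) + cfP a n = (b (n + 1) : ℤ) * cfP b (n + 1) + cfP b n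
    rw [h, ih2.1, ih1.1]
  · show (a (n + 1) : ℤ) * cfQ a (n + 1) + cfQ a n = (b (n + 1) : ℤ) * cfQ b (n + 1) + cfQ b n
    rw [h, ih2.2, ih1.2]

lemma cfVal_tail_eq {a b : ℕ → ℕ} (hab : ∀ i, 1 ≤ i → a i = b i) : cfVal a = cfVal b := by
  have hconv : cfConv a = cfConv b := by
    funext n
    rw [cfConv, cfConv, (cf_tail_eq hab (n + 1)).1, (cf_tail_eq hab (n + 1)).2]
  rw [cfVal, cfVal, hconv]

lemma shiftS_iterate (ω : ℕ → ℕ+) : ∀ k, shiftS^[k] ω = fun m => ω (m + k) := by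
  intro k
  induction k with
  | zero => funext m; simp
  | succ j ih =>
    rw [Function.iterate_succ_apply', ih]
    funext m
    show ω (m + 1 + j) = ω (m + (j + 1))
    have h : m + 1 + j = m + (j + 1) := by omega
    rw [h]

lemma Xtail_one (ω : ℕ → ℕ+) : Xtail ω 1 = cfVal (aof ω) := by
  rw [Xtail]
  refine cfVal_tail_eq fun i hi => ?_
  show (ω (i + 1 - 2) : ℕ) = (ω (i - 1) : ℕ)
  have h : i + 1 - 2 = i - 1 := by omega
  rw [h]

lemma Xtail_shift (ω : ℕ → ℕ+) (k : ℕ) :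
    Xtail (shiftS^[k] ω) 1 = cfVal (RandomLevy.sh^[k] (aof ω)) := by
  rw [Xtail_one, sh_iterate]
  refine cfVal_tail_eq fun i hi => ?_
  show (aof (shiftS^[k] ω)) i = (fun i => aof ω (i + k)) i
  show ((shiftS^[k] ω) (i - 1) : ℕ) = (ω (i + k - 1) : ℕ)
  rw [shiftS_iterate]
  show (ω (i - 1 + k) : ℕ) = (ω (i + k - 1) : ℕ)
  have h : i - 1 + k = i + k - 1 := by omega
  rw [h]

lemma measurable_cf : ∀ n, Measurable (fun ω : ℕ → ℕ+ => ((cfP (aof ω) n : ℤ) : ℝ)) ∧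
    Measurable (fun ω : ℕ → ℕ+ => ((cfQ (aof ω) n : ℤ) : ℝ)) := by
  have hcoord : ∀ m : ℕ, Measurable (fun ω : ℕ → ℕ+ => ((aof ω m : ℕ) : ℝ)) := by
    intro m
    show Measurable fun ω : ℕ → ℕ+ => ((ω (m - 1) : ℕ) : ℝ)
    have h1 : Measurable fun x : ℕ+ => ((x : ℕ) : ℝ) := measurable_from_top
    exact h1.comp (measurable_pi_apply (m - 1))
  refine two_step (⟨by simp only [cfP]; exact measurable_const,
      by simp only [cfQ]; exact measurable_const⟩)
    (⟨by simp only [cfP]; exact measurable_const,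
      by simp only [cfQ]; exact measurable_const⟩) (fun n ih1 ih2 => ?_)
  constructor
  · have : (fun ω : ℕ → ℕ+ => ((cfP (aof ω) (n + 2) : ℤ) : ℝ)) = fun ω =>
        ((aof ω (n + 1) : ℕ) : ℝ) * ((cfP (aof ω) (n + 1) : ℤ) : ℝ) + ((cfP (aof ω) n : ℤ) : ℝ) := by
      funext ω
      show (((aof ω (n + 1) : ℤ) * cfP (aof ω) (n + 1) + cfP (aof ω) n : ℤ) : ℝ) = _
      push_cast
      ring
    rw [this]
    exact ((hcoord (n + 1)).mul ih2.1).add ih1.1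
  · have : (fun ω : ℕ → ℕ+ => ((cfQ (aof ω) (n + 2) : ℤ) : ℝ)) = fun ω =>
        ((aof ω (n + 1) : ℕ) : ℝ) * ((cfQ (aof ω) (n + 1) : ℤ) : ℝ) + ((cfQ (aof ω) n : ℤ) : ℝ) := by
      funext ω
      show (((aof ω (n + 1) : ℤ) * cfQ (aof ω) (n + 1) + cfQ (aof ω) n : ℤ) : ℝ) = _
      push_cast
      ring
    rw [this]
    exact ((hcoord (n + 1)).mul ih2.2).add ih1.2

lemma measurable_cfVal_aof : Measurable (fun ω : ℕ → ℕ+ => cfVal (aof ω)) := by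
  refine measurable_of_tendsto_metrizable
    (f := fun n ω => cfConv (aof ω) n) (fun n => ?_) ?_
  · exact (measurable_cf (n + 1)).1.div (measurable_cf (n + 1)).2
  · rw [tendsto_pi_nhds]
    exact fun ω => cfVal_tendsto (valid_aof ω)

end glue

end RandomLevy

/-- **Lévy-type theorem for random continued fractions.** If the left shift is
measure-preserving and ergodic for `P` and `E(log A_1) < ∞`, then for `P`-almost
every `ω`, `lim_{n→∞} (1/n) log Q_n(ω) = −∫ log X dP`. -/
theorem random_levy_constant (P : Measure (ℕ → ℕ+)) [IsProbabilityMeasure P]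
    (hmp : MeasurePreserving shiftS P P) (herg : Ergodic shiftS P)
    (hint : Integrable (fun ω : ℕ → ℕ+ => Real.log ((ω 0 : ℕ) : ℝ)) P) :
    ∀ᵐ ω ∂P,
      Tendsto (fun n : ℕ => (1 / (n : ℝ)) * Real.log ((Qent ω n : ℝ))) atTop
        (𝓝 (-∫ ω', Real.log (Xtail ω' 1) ∂P)) := by
  classical
  set G : (ℕ → ℕ+) → ℝ := fun ω => Real.log (Xtail ω 1) with hG
  have hGeq : ∀ ω : ℕ → ℕ+, G ω = Real.log (cfVal (RandomLevy.aof ω)) := fun ω => by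
    show Real.log (Xtail ω 1) = _
    rw [RandomLevy.Xtail_one]
  have hGmeas : Measurable G := by
    have hfe : G = fun ω => Real.log (cfVal (RandomLevy.aof ω)) := funext hGeq
    rw [hfe]
    exact Real.measurable_log.comp RandomLevy.measurable_cfVal_aof
  have hbound : ∀ ω : ℕ → ℕ+, ‖G ω‖ ≤ Real.log 2 + Real.log ((ω 0 : ℕ) : ℝ) := by
    intro ω
    rw [hGeq]
    set X := cfVal (RandomLevy.aof ω) with hX
    have hv := RandomLevy.valid_aof ω
    have h1 : X < 1 := RandomLevy.cfVal_lt_one hv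
    have h0 : 0 < X := RandomLevy.cfVal_pos hv
    have hgt : 1 / (((ω 0 : ℕ) : ℝ) + 1) < X := by
      have hd := RandomLevy.one_div_lt_cfVal hv
      have ha1 : ((RandomLevy.aof ω) 1 : ℝ) = ((ω 0 : ℕ) : ℝ) := rfl
      rwa [ha1] at hd
    have hω1 : (1 : ℝ) ≤ ((ω 0 : ℕ) : ℝ) := by exact_mod_cast (ω 0).property
    have hlogneg : Real.log X ≤ 0 := Real.log_nonpos h0.le h1.le
    rw [Real.norm_eq_abs, abs_of_nonpos hlogneg]
    have hlb : Real.log (1 / (((ω 0 : ℕ) : ℝ) + 1)) ≤ Real.log X :=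
      Real.log_le_log (by positivity) hgt.le
    rw [Real.log_div one_ne_zero (by positivity), Real.log_one] at hlb
    have h2 : Real.log (((ω 0 : ℕ) : ℝ) + 1) ≤ Real.log 2 + Real.log ((ω 0 : ℕ) : ℝ) := by
      rw [← Real.log_mul two_ne_zero (by linarith)]
      exact Real.log_le_log (by linarith) (by linarith)
    linarith
  have hGint : Integrable G P :=
    Integrable.mono' ((integrable_const (Real.log 2)).add hint)
      hGmeas.aestronglyMeasurable (Eventually.of_forall hbound)
  have hbirk := RandomLevy.birkhoff_ergodic herg hGmeas hGint
  filter_upwards [hbirk] with ω hω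
  have hS : ∀ n : ℕ, RandomLevy.bS shiftS G n ω
      = ∑ k ∈ Finset.range n, Real.log (cfVal (RandomLevy.sh^[k] (RandomLevy.aof ω))) := by
    intro n
    refine Finset.sum_congr rfl fun k _ => ?_
    show Real.log (Xtail (shiftS^[k] ω) 1) = _
    exact congrArg Real.log (RandomLevy.Xtail_shift ω k)
  have hlog2 : ∀ n : ℕ, |Real.log ((Qent ω n : ℝ)) + RandomLevy.bS shiftS G n ω|
      ≤ Real.log 2 := by
    intro n
    rw [hS n]
    exact RandomLevy.log_Q_bound (RandomLevy.valid_aof ω) n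
  have h1 : Tendsto (fun n : ℕ => -(RandomLevy.bS shiftS G n ω / n)) atTop
      (𝓝 (-∫ ω', G ω' ∂P)) := hω.neg
  have h2 : Tendsto (fun n : ℕ => (1 / (n : ℝ)) * Real.log ((Qent ω n : ℝ))
      - (-(RandomLevy.bS shiftS G n ω / n))) atTop (𝓝 0) := by
    apply squeeze_zero_norm' ?_ (tendsto_const_div_atTop_nhds_zero_nat (Real.log 2))
    filter_upwards [eventually_ge_atTop 1] with n hn
    have hnpos : (0 : ℝ) < n := by exact_mod_cast hn
    have heq : (1 / (n : ℝ)) * Real.log ((Qent ω n : ℝ))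
        - (-(RandomLevy.bS shiftS G n ω / n))
        = (Real.log ((Qent ω n : ℝ)) + RandomLevy.bS shiftS G n ω) / n := by
      field_simp
      ring
    rw [heq, Real.norm_eq_abs, abs_div, abs_of_pos hnpos]
    gcongr
    exact hlog2 n
  have h3 := h2.add h1
  have h4 : (fun n : ℕ => ((1 / (n : ℝ)) * Real.log ((Qent ω n : ℝ))
      - (-(RandomLevy.bS shiftS G n ω / n))) + (-(RandomLevy.bS shiftS G n ω / n)))
      = fun n : ℕ => (1 / (n : ℝ)) * Real.log ((Qent ω n : ℝ)) := by
    funext n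
    ring
  rw [h4] at h3
  simpa using h3
end

section
/- For every n ≥ 1, the product X_1·X_2·⋯·X_n equals |X_1·Q_{n−1} − P_{n−1}|. -/
open Filter Topology

/-- The sequence `a_k, a_{k+1}, a_{k+2}, …` (the tail of `a` starting at
index `k ≥ 1`), reindexed from `1`. -/
def cfShift (a : ℕ → ℕ) (k : ℕ) : ℕ → ℕ := fun i => a (i + k - 1)

lemma cfP_nonneg (c : ℕ → ℕ) : ∀ n, (0 : ℤ) ≤ cfP c n
  | 0 => by simp [cfP]
  | 1 => by simp [cfP]
  | (n+2) => by
    have h1 := cfP_nonneg c (n+1)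
    have h2 := cfP_nonneg c n
    simp only [cfP]
    positivity

lemma cfQ_nonneg (c : ℕ → ℕ) : ∀ n, (0 : ℤ) ≤ cfQ c n
  | 0 => by simp [cfQ]
  | 1 => by simp [cfQ]
  | (n+2) => by
    have h1 := cfQ_nonneg c (n+1)
    have h2 := cfQ_nonneg c n
    simp only [cfQ]
    positivity

lemma cfQ_pos (c : ℕ → ℕ) (h : ∀ i, 1 ≤ i → 1 ≤ c i) : ∀ n, (1 : ℤ) ≤ cfQ c (n+1)
  | 0 => le_refl 1
  | (n+1) => by
    have h1 := cfQ_pos c h n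
    have h2 := cfQ_nonneg c n
    have h3 : (1 : ℤ) ≤ (c (n+1) : ℤ) := by
      exact_mod_cast h (n+1) (Nat.succ_le_succ (Nat.zero_le n))
    show (c (n+1) : ℤ) * cfQ c (n+1) + cfQ c n ≥ 1
    nlinarith

lemma cfP_shift (b : ℕ → ℕ) : ∀ n, cfP b (n+2) = cfQ (fun i => b (i+1)) (n+1)
  | 0 => by simp [cfP, cfQ]
  | 1 => by simp [cfP, cfQ]
  | (n+2) => by
    have h1 := cfP_shift b (n+1)
    have h2 := cfP_shift b n
    show (b (n+3) : ℤ) * cfP b (n+3) + cfP b (n+2) =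
      (b ((n+2)+1) : ℤ) * cfQ (fun i => b (i+1)) (n+2) + cfQ (fun i => b (i+1)) (n+1)
    rw [h1, h2]

lemma cfQ_shift (b : ℕ → ℕ) :
    ∀ n, cfQ b (n+2) = (b 1 : ℤ) * cfQ (fun i => b (i+1)) (n+1) + cfP (fun i => b (i+1)) (n+1)
  | 0 => by simp [cfP, cfQ]
  | 1 => by simp [cfP, cfQ]; ring
  | (n+2) => by
    have h1 := cfQ_shift b (n+1)
    have h2 := cfQ_shift b n
    show (b (n+3) : ℤ) * cfQ b (n+3) + cfQ b (n+2) = _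
    rw [h1, h2]
    show _ = (b 1 : ℤ) * ((b ((n+2)+1) : ℤ) * cfQ (fun i => b (i+1)) (n+2) + cfQ (fun i => b (i+1)) (n+1))
      + ((b ((n+2)+1) : ℤ) * cfP (fun i => b (i+1)) (n+2) + cfP (fun i => b (i+1)) (n+1))
    ring

lemma cfShift_succ (a : ℕ → ℕ) (k : ℕ) (hk : 1 ≤ k) :
    (fun i => cfShift a k (i+1)) = cfShift a (k+1) := by
  funext i
  show a (i + 1 + k - 1) = a (i + (k+1) - 1)
  congr 1
  omega

lemma cfConv_succ (a : ℕ → ℕ) (ha : ∀ k, 1 ≤ k → 1 ≤ a k) (k : ℕ) (hk : 1 ≤ k) (n : ℕ) :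
    cfConv (cfShift a k) (n+1) = 1 / ((a k : ℝ) + cfConv (cfShift a (k+1)) n) := by
  have hsh : ∀ i, 1 ≤ i → 1 ≤ cfShift a (k+1) i := by
    intro i hi
    apply ha
    show 1 ≤ i + (k+1) - 1
    omega
  have hQpos : (1 : ℤ) ≤ cfQ (cfShift a (k+1)) (n+1) := cfQ_pos _ hsh n
  have hPnn : (0 : ℤ) ≤ cfP (cfShift a (k+1)) (n+1) := cfP_nonneg _ _
  have hak : (1 : ℝ) ≤ (a k : ℝ) := by exact_mod_cast ha k hk
  have hb1 : cfShift a k 1 = a k := by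
    show a (1 + k - 1) = a k
    congr 1
    omega
  unfold cfConv
  rw [cfP_shift, cfQ_shift, cfShift_succ a k hk, hb1]
  have hQR : (0 : ℝ) < (cfQ (cfShift a (k+1)) (n+1) : ℝ) := by exact_mod_cast hQpos
  have hPR : (0 : ℝ) ≤ (cfP (cfShift a (k+1)) (n+1) : ℝ) := by exact_mod_cast hPnn
  have hden : (0 : ℝ) < (a k : ℝ) * (cfQ (cfShift a (k+1)) (n+1) : ℝ)
      + (cfP (cfShift a (k+1)) (n+1) : ℝ) := by nlinarith
  have hden2 : (0 : ℝ) < (a k : ℝ) + (cfP (cfShift a (k+1)) (n+1) : ℝ) / (cfQ (cfShift a (k+1)) (n+1) : ℝ) := by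
    positivity
  push_cast
  field_simp


lemma X_nonneg (a : ℕ → ℕ) (X : ℕ → ℝ)
    (hX : ∀ k, 1 ≤ k → Tendsto (cfConv (cfShift a k)) atTop (𝓝 (X k)))
    (k : ℕ) (hk : 1 ≤ k) : 0 ≤ X k := by
  refine ge_of_tendsto (hX k hk) (Eventually.of_forall fun n => ?_)
  unfold cfConv
  have h1 : (0 : ℝ) ≤ (cfP (cfShift a k) (n+1) : ℝ) := by exact_mod_cast cfP_nonneg _ _
  have h2 : (0 : ℝ) ≤ (cfQ (cfShift a k) (n+1) : ℝ) := by exact_mod_cast cfQ_nonneg _ _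
  positivity

lemma X_tail (a : ℕ → ℕ) (ha : ∀ k, 1 ≤ k → 1 ≤ a k) (X : ℕ → ℝ)
    (hX : ∀ k, 1 ≤ k → Tendsto (cfConv (cfShift a k)) atTop (𝓝 (X k)))
    (k : ℕ) (hk : 1 ≤ k) : X k = 1 / ((a k : ℝ) + X (k+1)) := by
  have hXk1 : 0 ≤ X (k+1) := X_nonneg a X hX (k+1) (by omega)
  have hak : (1 : ℝ) ≤ (a k : ℝ) := by exact_mod_cast ha k hk
  have hne : (a k : ℝ) + X (k+1) ≠ 0 := by positivity
  have h1 : Tendsto (fun n => cfConv (cfShift a k) (n+1)) atTop (𝓝 (X k)) :=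
    (hX k hk).comp (tendsto_add_atTop_nat 1)
  have h2 : Tendsto (fun n => 1 / ((a k : ℝ) + cfConv (cfShift a (k+1)) n)) atTop
      (𝓝 (1 / ((a k : ℝ) + X (k+1)))) := by
    apply Tendsto.div tendsto_const_nhds
    · exact Tendsto.const_add _ (hX (k+1) (by omega))
    · exact hne
  have heq : (fun n => cfConv (cfShift a k) (n+1)) =
      (fun n => 1 / ((a k : ℝ) + cfConv (cfShift a (k+1)) n)) := by
    funext n
    exact cfConv_succ a ha k hk n
  rw [heq] at h1
  exact tendsto_nhds_unique h1 h2

lemma E_step (a : ℕ → ℕ) (ha : ∀ k, 1 ≤ k → 1 ≤ a k) (X : ℕ → ℝ)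
    (hX : ∀ k, 1 ≤ k → Tendsto (cfConv (cfShift a k)) atTop (𝓝 (X k))) :
    ∀ m, X 1 * (cfQ a (m+1) : ℝ) - (cfP a (m+1) : ℝ) =
      -(X (m+1)) * (X 1 * (cfQ a m : ℝ) - (cfP a m : ℝ)) := by
  intro m
  induction m with
  | zero => simp [cfP, cfQ]
  | succ m ih =>
    have htail := X_tail a ha X hX (m+1) (by omega)
    have hXnn : 0 ≤ X (m+2) := X_nonneg a X hX (m+2) (by omega)
    have hak : (1 : ℝ) ≤ (a (m+1) : ℝ) := by exact_mod_cast ha (m+1) (by omega)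
    have hden : (0:ℝ) < (a (m+1) : ℝ) + X (m+2) := by positivity
    have hkey : X (m+1) * ((a (m+1) : ℝ) + X (m+2)) = 1 := by
      rw [htail]; field_simp
    show X 1 * (((a (m+1) : ℤ) * cfQ a (m+1) + cfQ a m : ℤ) : ℝ)
        - (((a (m+1) : ℤ) * cfP a (m+1) + cfP a m : ℤ) : ℝ)
      = -(X (m+2)) * (X 1 * (cfQ a (m+1) : ℝ) - (cfP a (m+1) : ℝ))
    push_cast
    linear_combination ((a (m+1) : ℝ) + X (m+2)) * ih
      - (X 1 * (cfQ a m : ℝ) - (cfP a m : ℝ)) * hkey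

lemma abs_E (a : ℕ → ℕ) (ha : ∀ k, 1 ≤ k → 1 ≤ a k) (X : ℕ → ℝ)
    (hX : ∀ k, 1 ≤ k → Tendsto (cfConv (cfShift a k)) atTop (𝓝 (X k))) :
    ∀ m, |X 1 * (cfQ a m : ℝ) - (cfP a m : ℝ)| = ∏ k ∈ Finset.Icc 1 m, X k := by
  intro m
  induction m with
  | zero => simp [cfP, cfQ]
  | succ m ih =>
    rw [E_step a ha X hX m, abs_mul, abs_neg, ih,
      abs_of_nonneg (X_nonneg a X hX (m+1) (by omega))]
    rw [show m + 1 = m + 1 from rfl, Finset.prod_Icc_succ_top (by omega : 1 ≤ m + 1)]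
    ring

/-- For every `n ≥ 1`, `X_1 X_2 ⋯ X_n = |X_1 Q_{n−1} − P_{n−1}|`, where `X k`
is the value of the infinite continued fraction `[a_k, a_{k+1}, …]`. -/
theorem cf_tail_product (a : ℕ → ℕ) (ha : ∀ k, 1 ≤ k → 1 ≤ a k)
    (X : ℕ → ℝ)
    (hX : ∀ k, 1 ≤ k → Tendsto (cfConv (cfShift a k)) atTop (𝓝 (X k)))
    (n : ℕ) (hn : 1 ≤ n) :
    (∏ k ∈ Finset.Icc 1 n, X k) = |X 1 * (cfQ a n : ℝ) - (cfP a n : ℝ)| := by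
  exact (abs_E a ha X hX n).symm
end

section
/- Suppose the coordinate process {A_n, n ≥ 1} is ψ-mixing and E(A_1^s) < ∞ for each 0 < s < 1. Then for every 0 < t < 1 and every ε > 0 there exists N > 0 such that for every integrable function g measurable with respect to σ(A_N, A_{N+1}, …), E(X_1^{−t}·|g|) ≤ (1 + ε)²·E(X_1^{−t})·E(|g|). -/
open Filter MeasureTheory Real Topology

/-- The σ-algebra `σ(A_1, …, A_m)` generated by the first `m` coordinates. -/
def finAlg (m : ℕ) : MeasurableSpace (ℕ → ℕ+) :=
  MeasurableSpace.comap (fun ω (i : Fin m) => ω i) inferInstance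

/-- The σ-algebra `σ(A_{j+1}, A_{j+2}, …)` generated by the coordinates of
index `≥ j`, i.e. by `A_{j+1}, A_{j+2}, …`. -/
def tailAlg (j : ℕ) : MeasurableSpace (ℕ → ℕ+) :=
  MeasurableSpace.comap (fun ω (i : ℕ) => ω (i + j)) inferInstance

/-- The process `{A_n, n ≥ 1}` is ψ-mixing: it is stationary (the left shift
preserves `P`) and there is `ψ : ℕ → [0,∞)` with `ψ(n) → 0` such that
`|E(fg) − E(f)E(g)| ≤ ψ(n) E|f| E|g|` for all `m, n ≥ 1`, every integrable
`f ∈ σ(A_1,…,A_m)` and every integrable `g ∈ σ(A_{m+n}, A_{m+n+1}, …)`. -/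
def PsiMixing (P : Measure (ℕ → ℕ+)) : Prop :=
  MeasurePreserving shiftS P P ∧
  ∃ ψ : ℕ → ℝ, (∀ n, 0 ≤ ψ n) ∧ Tendsto ψ atTop (𝓝 0) ∧
    ∀ m n : ℕ, 1 ≤ m → 1 ≤ n → ∀ f g : (ℕ → ℕ+) → ℝ,
      Integrable f P → Integrable g P →
      Measurable[finAlg m] f → Measurable[tailAlg (m + n - 1)] g →
      |(∫ ω, f ω * g ω ∂P) - (∫ ω, f ω ∂P) * (∫ ω, g ω ∂P)| ≤
        ψ n * (∫ ω, |f ω| ∂P) * (∫ ω, |g ω| ∂P)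

namespace CFAux

variable (a : ℕ → ℕ)

lemma cfQ_nonneg : ∀ n, 0 ≤ cfQ a n
  | 0 => le_refl 0
  | 1 => zero_le_one
  | (n+2) => by
      have h1 := cfQ_nonneg (n+1)
      have h2 := cfQ_nonneg n
      have h3 : (0:ℤ) ≤ (a (n+1) : ℤ) := Int.natCast_nonneg _
      simp only [cfQ]
      nlinarith

lemma cfP_nonneg : ∀ n, 0 ≤ cfP a n
  | 0 => zero_le_one
  | 1 => le_refl 0
  | (n+2) => by
      have h1 := cfP_nonneg (n+1)
      have h2 := cfP_nonneg n
      have h3 : (0:ℤ) ≤ (a (n+1) : ℤ) := Int.natCast_nonneg _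
      simp only [cfP]
      nlinarith

variable {a} (ha : ∀ i, 1 ≤ a i)
include ha

lemma cfQ_one_le : ∀ n, 1 ≤ cfQ a (n+1)
  | 0 => le_refl 1
  | (n+1) => by
      have h1 := cfQ_one_le n
      have h2 := cfQ_nonneg a n
      have h3 : (1:ℤ) ≤ (a (n+1) : ℤ) := by exact_mod_cast ha (n+1)
      show 1 ≤ (a (n+1) : ℤ) * cfQ a (n+1) + cfQ a n
      nlinarith

lemma cfP_one_le : ∀ n, 1 ≤ cfP a (n+2)
  | 0 => by simp [cfP]
  | (n+1) => by
      have h1 := cfP_one_le n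
      have h2 := cfP_nonneg a (n+1)
      have h3 : (1:ℤ) ≤ (a (n+2) : ℤ) := by exact_mod_cast ha (n+2)
      show 1 ≤ (a (n+2) : ℤ) * cfP a (n+2) + cfP a (n+1)
      nlinarith

lemma cfQ_mono_succ (n : ℕ) : cfQ a n ≤ cfQ a (n+1) := by
  cases n with
  | zero => exact zero_le_one
  | succ n =>
      have h1 := cfQ_one_le ha n
      have h2 := cfQ_nonneg a n
      have h3 : (1:ℤ) ≤ (a (n+1) : ℤ) := by exact_mod_cast ha (n+1)
      show cfQ a (n+1) ≤ (a (n+1) : ℤ) * cfQ a (n+1) + cfQ a n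
      nlinarith

lemma cfQ_mono : Monotone (cfQ a) :=
  monotone_nat_of_le_succ (cfQ_mono_succ ha)

lemma cfP_mono_succ (n : ℕ) : cfP a (n+1) ≤ cfP a (n+2) := by
  cases n with
  | zero => simp [cfP]
  | succ n =>
      have h1 := cfP_one_le ha n
      have h2 := cfP_nonneg a (n+1)
      have h3 : (1:ℤ) ≤ (a (n+2) : ℤ) := by exact_mod_cast ha (n+2)
      show cfP a (n+2) ≤ (a (n+2) : ℤ) * cfP a (n+2) + cfP a (n+1)
      nlinarith

lemma cfP_mono {n k : ℕ} (h : n ≤ k) : cfP a (n+1) ≤ cfP a (k+1) := by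
  induction k, h using Nat.le_induction with
  | base => exact le_refl _
  | succ k hk ih => exact ih.trans (cfP_mono_succ ha k)

lemma cfQ_two_step (n : ℕ) : 2 * cfQ a (n+1) ≤ cfQ a (n+3) := by
  have h1 := cfQ_mono ha (show n+1 ≤ n+2 by omega)
  have h2 := cfQ_one_le ha n
  have h3 := cfQ_one_le ha (n+1)
  have h4 : (1:ℤ) ≤ (a (n+2) : ℤ) := by exact_mod_cast ha (n+2)
  show 2 * cfQ a (n+1) ≤ (a (n+2) : ℤ) * cfQ a (n+2) + cfQ a (n+1)
  nlinarith

lemma cfP_two_step (n : ℕ) : 2 * cfP a (n+2) ≤ cfP a (n+4) := by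
  have h1 := cfP_mono_succ ha (n+1)
  have h2 := cfP_one_le ha n
  have h3 := cfP_one_le ha (n+1)
  have h4 : (1:ℤ) ≤ (a (n+3) : ℤ) := by exact_mod_cast ha (n+3)
  show 2 * cfP a (n+2) ≤ (a (n+3) : ℤ) * cfP a (n+3) + cfP a (n+2)
  nlinarith

lemma cfQ_pow : ∀ k, (2:ℤ)^k ≤ cfQ a (2*k+2)
  | 0 => by
      have h3 : (1:ℤ) ≤ (a 1 : ℤ) := by exact_mod_cast ha 1
      show (1:ℤ) ≤ cfQ a 2
      show (1:ℤ) ≤ (a 1 : ℤ) * cfQ a 1 + cfQ a 0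
      simp [cfQ]; omega
  | (k+1) => by
      have h1 := cfQ_pow k
      have h2 := cfQ_two_step ha (2*k+1)
      have : 2*(k+1)+2 = (2*k+1)+3 := by ring
      rw [this, pow_succ]
      nlinarith [cfQ_nonneg a (2*k+2)]

lemma cfP_pow : ∀ k, (2:ℤ)^k ≤ cfP a (2*k+2)
  | 0 => by simpa using cfP_one_le ha 0
  | (k+1) => by
      have h1 := cfP_pow k
      have h2 := cfP_two_step ha (2*k)
      have : 2*(k+1)+2 = (2*k)+4 := by ring
      rw [this, pow_succ]
      nlinarith [cfP_nonneg a (2*k+2)]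

lemma cfQQ_pow : ∀ n, (2:ℤ)^n ≤ cfQ a (n+1) * cfQ a (n+2)
  | 0 => by
      have h3 : (1:ℤ) ≤ (a 1 : ℤ) := by exact_mod_cast ha 1
      show (1:ℤ) ≤ cfQ a 1 * cfQ a 2
      show (1:ℤ) ≤ cfQ a 1 * ((a 1 : ℤ) * cfQ a 1 + cfQ a 0)
      simp [cfQ]; omega
  | (n+1) => by
      have h1 := cfQQ_pow n
      have h2 := cfQ_two_step ha n
      have h3 := cfQ_one_le ha (n+1)
      rw [pow_succ]
      nlinarith [cfQ_nonneg a (n+1), cfQ_nonneg a (n+2)]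

omit ha in
lemma cf_det : ∀ n, cfP a (n+1) * cfQ a n - cfP a n * cfQ a (n+1) = (-1:ℤ)^(n+1)
  | 0 => by simp [cfP, cfQ]
  | (n+1) => by
      have h := cf_det n
      show ((a (n+1) : ℤ) * cfP a (n+1) + cfP a n) * cfQ a (n+1)
          - cfP a (n+1) * ((a (n+1) : ℤ) * cfQ a (n+1) + cfQ a n) = (-1:ℤ)^(n+2)
      have : ((-1:ℤ))^(n+2) = -((-1)^(n+1)) := by ring
      rw [this, ← h]; ring


omit ha in
lemma cfQR_pos (n : ℕ) (ha : ∀ i, 1 ≤ a i) : (0:ℝ) < (cfQ a (n+1) : ℝ) := by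
  exact_mod_cast lt_of_lt_of_le zero_lt_one (cfQ_one_le ha n)

lemma conv_diff (n : ℕ) :
    cfConv a (n+1) - cfConv a n
      = (-1:ℝ)^n / ((cfQ a (n+1):ℝ) * (cfQ a (n+2):ℝ)) := by
  have hq1 := cfQR_pos (a := a) n ha
  have hq2 := cfQR_pos (a := a) (n+1) ha
  have hd := cf_det (a := a) (n+1)
  have key : (cfP a (n+2):ℝ) * (cfQ a (n+1):ℝ) - (cfQ a (n+2):ℝ) * (cfP a (n+1):ℝ)
      = (-1:ℝ)^n := by
    have : ((-1:ℝ))^(n+2) = (-1:ℝ)^n := by ring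
    rw [← this]
    exact_mod_cast (by linarith [hd] : cfP a (n+2) * cfQ a (n+1) - cfQ a (n+2) * cfP a (n+1) = (-1:ℤ)^(n+2))
  rw [cfConv, cfConv, div_sub_div _ _ hq2.ne' hq1.ne', key, mul_comm ((cfQ a (n+2):ℝ))]

noncomputable def Icf (b : ℕ → ℕ) (n : ℕ) : Set ℝ :=
  Set.Icc (min (cfConv b n) (cfConv b (n+1))) (max (cfConv b n) (cfConv b (n+1)))

omit ha in
lemma self_mem_Icf (n : ℕ) : cfConv a n ∈ Icf a n :=
  Set.mem_Icc.mpr ⟨min_le_left _ _, le_max_left _ _⟩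

omit ha in
lemma succ_mem_Icf (n : ℕ) : cfConv a (n+1) ∈ Icf a n :=
  Set.mem_Icc.mpr ⟨min_le_right _ _, le_max_right _ _⟩

lemma conv_between (n : ℕ) : cfConv a (n+2) ∈ Icf a n := by
  have d1 := conv_diff ha n
  have d2 : cfConv a (n+2) - cfConv a (n+1)
      = (-1:ℝ)^(n+1) / ((cfQ a (n+2):ℝ) * (cfQ a (n+3):ℝ)) := conv_diff ha (n+1)
  have hq1 := cfQR_pos (a := a) n ha
  have hq2 : (0:ℝ) < (cfQ a (n+2):ℝ) := cfQR_pos (a := a) (n+1) ha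
  have hq3 : (0:ℝ) < (cfQ a (n+3):ℝ) := cfQR_pos (a := a) (n+2) ha
  have hmono : (cfQ a (n+1):ℝ) ≤ (cfQ a (n+3):ℝ) := by
    exact_mod_cast cfQ_mono ha (show n+1 ≤ n+3 by omega)
  have key : 1/((cfQ a (n+2):ℝ) * (cfQ a (n+3):ℝ)) ≤ 1/((cfQ a (n+1):ℝ) * (cfQ a (n+2):ℝ)) := by
    apply one_div_le_one_div_of_le (by positivity)
    nlinarith
  have hA : (0:ℝ) < 1/((cfQ a (n+1):ℝ) * (cfQ a (n+2):ℝ)) := by positivity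
  have hB : (0:ℝ) < 1/((cfQ a (n+2):ℝ) * (cfQ a (n+3):ℝ)) := by positivity
  rcases Nat.even_or_odd n with he | ho
  · have e1 : ((-1:ℝ))^n = 1 := he.neg_one_pow
    have e2 : ((-1:ℝ))^(n+1) = -1 := (Even.add_one he).neg_one_pow
    rw [e1] at d1; rw [e2] at d2
    rw [div_eq_mul_one_div, one_mul] at d1
    rw [div_eq_mul_one_div, neg_one_mul] at d2
    refine Set.mem_Icc.mpr ⟨le_trans (min_le_left _ _) ?_, le_trans ?_ (le_max_right _ _)⟩
    · linarith
    · linarith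
  · have e1 : ((-1:ℝ))^n = -1 := ho.neg_one_pow
    have e2 : ((-1:ℝ))^(n+1) = 1 := (Odd.add_one ho).neg_one_pow
    rw [e1] at d1; rw [e2] at d2
    rw [div_eq_mul_one_div, neg_one_mul] at d1
    rw [div_eq_mul_one_div, one_mul] at d2
    refine Set.mem_Icc.mpr ⟨le_trans (min_le_right _ _) ?_, le_trans ?_ (le_max_left _ _)⟩
    · linarith
    · linarith

lemma Icf_succ_subset (n : ℕ) : Icf a (n+1) ⊆ Icf a n := by
  have h1 := succ_mem_Icf (a := a) n
  have h2 := conv_between ha n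
  simp only [Icf, Set.mem_Icc] at h1 h2
  exact Set.Icc_subset_Icc (le_min h1.1 h2.1) (max_le h1.2 h2.2)

lemma Icf_subset {n m : ℕ} (h : n ≤ m) : Icf a m ⊆ Icf a n := by
  induction m, h using Nat.le_induction with
  | base => exact le_refl _
  | succ m hm ih => exact (Icf_succ_subset ha m).trans ih

lemma conv_mem_Icf {n k : ℕ} (h : n ≤ k) : cfConv a k ∈ Icf a n :=
  Icf_subset ha h (self_mem_Icf (a := a) k)

lemma conv_dist (n : ℕ) : dist (cfConv a n) (cfConv a (n+1)) ≤ 1 * (1/2)^n := by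
  have hq1 := cfQR_pos (a := a) n ha
  have hq2 : (0:ℝ) < (cfQ a (n+2):ℝ) := cfQR_pos (a := a) (n+1) ha
  have hqq : (2:ℝ)^n ≤ (cfQ a (n+1):ℝ) * (cfQ a (n+2):ℝ) := by
    exact_mod_cast cfQQ_pow ha n
  have h := conv_diff ha n
  rw [dist_comm, Real.dist_eq, h, abs_div, abs_pow, abs_neg, abs_one, one_pow,
    abs_of_pos (by positivity), one_mul, div_pow, one_pow,
    div_le_div_iff₀ (by positivity) (by positivity)]
  nlinarith [pow_pos (by norm_num : (0:ℝ) < 2) n]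

lemma conv_tendsto : Tendsto (cfConv a) atTop (𝓝 (cfVal a)) := by
  have hc : CauchySeq (cfConv a) :=
    cauchySeq_of_le_geometric (1/2) 1 (by norm_num) (conv_dist ha)
  obtain ⟨l, hl⟩ := cauchySeq_tendsto_of_complete hc
  have : cfVal a = l := hl.limUnder_eq
  rw [this]; exact hl

lemma cfVal_mem_Icf (n : ℕ) : cfVal a ∈ Icf a n := by
  refine isClosed_Icc.mem_of_tendsto (conv_tendsto ha) ?_
  filter_upwards [eventually_ge_atTop n] with k hk
  exact conv_mem_Icf ha hk


omit ha in
lemma cf_bounds (k : ℕ) (ha : ∀ i, 1 ≤ a i) :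
    1/((a 1:ℝ)+1) ≤ min (cfConv a (2*k+1)) (cfConv a (2*k+2)) ∧
    min (cfConv a (2*k+1)) (cfConv a (2*k+2)) ≤ cfVal a ∧
    cfVal a ≤ max (cfConv a (2*k+1)) (cfConv a (2*k+2)) ∧
    (4:ℝ)^k * (max (cfConv a (2*k+1)) (cfConv a (2*k+2))
        - min (cfConv a (2*k+1)) (cfConv a (2*k+2)))
      ≤ min (cfConv a (2*k+1)) (cfConv a (2*k+2)) := by
  set m := 2*k+1 with hm
  have hv := cfVal_mem_Icf ha m
  simp only [Icf, Set.mem_Icc] at hv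
  have hmm : m + 1 = 2*k+2 := by omega
  rw [hmm] at hv ⊢
  have ha1 : (1:ℝ) ≤ (a 1 : ℝ) := by exact_mod_cast ha 1
  have ha2 : (1:ℝ) ≤ (a 2 : ℝ) := by exact_mod_cast ha 2
  -- the first two convergents
  have e1 : cfConv a 1 = 1/((a 1 : ℝ)) := by
    show ((cfP a 2 : ℝ)) / ((cfQ a 2 : ℝ)) = _
    have hp : cfP a 2 = 1 := by simp [cfP]
    have hq : cfQ a 2 = (a 1 : ℤ) := by simp [cfQ]
    rw [hp, hq]; push_cast; ring
  have e2 : cfConv a 2 = (a 2 : ℝ)/((a 2 : ℝ)*(a 1 : ℝ)+1) := by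
    show ((cfP a 3 : ℝ)) / ((cfQ a 3 : ℝ)) = _
    have hp : cfP a 3 = (a 2 : ℤ) := by
      show (a 2 : ℤ) * cfP a 2 + cfP a 1 = (a 2 : ℤ)
      simp [cfP]
    have hq : cfQ a 3 = (a 2 : ℤ) * (a 1 : ℤ) + 1 := by
      show (a 2 : ℤ) * cfQ a 2 + cfQ a 1 = _
      simp [cfQ]
    rw [hp, hq]; push_cast; ring
  have hlow : ∀ x ∈ Icf a 1, 1/((a 1:ℝ)+1) ≤ x := by
    intro x hx
    simp only [Icf, Set.mem_Icc] at hx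
    refine le_trans (le_min ?_ ?_) hx.1
    · rw [e1]
      exact one_div_le_one_div_of_le (by linarith) (by linarith)
    · rw [e2, div_le_div_iff₀ (by linarith) (by nlinarith)]
      nlinarith
  have h1m : cfConv a m ∈ Icf a 1 := conv_mem_Icf ha (by omega)
  have h1m' : cfConv a (2*k+2) ∈ Icf a 1 := conv_mem_Icf ha (by omega)
  refine ⟨le_min (hlow _ h1m) (hlow _ h1m'), hv.1, hv.2, ?_⟩
  -- the ratio bound
  have hd : cfConv a (2*k+2) - cfConv a m
      = (-1:ℝ)^m / ((cfQ a (2*k+2):ℝ) * (cfQ a (2*k+3):ℝ)) := conv_diff ha m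
  have hq1 : (1:ℝ) ≤ (cfQ a (2*k+2):ℝ) := by exact_mod_cast cfQ_one_le ha (2*k+1)
  have hq2 : (1:ℝ) ≤ (cfQ a (2*k+3):ℝ) := by exact_mod_cast cfQ_one_le ha (2*k+2)
  have hq12 : (cfQ a (2*k+2):ℝ) ≤ (cfQ a (2*k+3):ℝ) := by
    exact_mod_cast cfQ_mono ha (show 2*k+2 ≤ 2*k+3 by omega)
  have hp1 : (1:ℝ) ≤ (cfP a (2*k+2):ℝ) := by
    exact_mod_cast cfP_one_le ha (2*k)
  have hp12 : (cfP a (2*k+2):ℝ) ≤ (cfP a (2*k+3):ℝ) := by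
    exact_mod_cast cfP_mono_succ ha (2*k+1)
  have hppow : (2:ℝ)^k ≤ (cfP a (2*k+2):ℝ) := by exact_mod_cast cfP_pow ha k
  have hqpow : (2:ℝ)^k ≤ (cfQ a (2*k+2):ℝ) := by exact_mod_cast cfQ_pow ha k
  have hdiam : max (cfConv a m) (cfConv a (2*k+2)) - min (cfConv a m) (cfConv a (2*k+2))
      = 1 / ((cfQ a (2*k+2):ℝ) * (cfQ a (2*k+3):ℝ)) := by
    rw [max_sub_min_eq_abs, hd, abs_div, abs_pow, abs_neg, abs_one, one_pow,
      abs_of_pos (by positivity)]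
  rw [hdiam]
  have hB : (cfP a (2*k+2):ℝ) / (cfQ a (2*k+3):ℝ)
      ≤ min (cfConv a m) (cfConv a (2*k+2)) := by
    refine le_min ?_ ?_
    · show _ ≤ (cfP a (m+1):ℝ) / (cfQ a (m+1):ℝ)
      rw [hmm]
      exact div_le_div_of_nonneg_left (by linarith) (by linarith) hq12
    · show _ ≤ (cfP a (2*k+3):ℝ) / (cfQ a (2*k+3):ℝ)
      gcongr <;> linarith
  refine le_trans ?_ hB
  rw [mul_one_div, div_le_div_iff₀ (by positivity) (by linarith)]
  have h4 : (4:ℝ)^k = 2^k * 2^k := by rw [← mul_pow]; norm_num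
  rw [h4]
  have h2k : (0:ℝ) ≤ (2:ℝ)^k := by positivity
  have hPQ : (2:ℝ)^k * 2^k ≤ (cfP a (2*k+2):ℝ) * (cfQ a (2*k+2):ℝ) :=
    mul_le_mul hppow hqpow h2k (by linarith)
  nlinarith [mul_le_mul_of_nonneg_right hPQ (by linarith : (0:ℝ) ≤ (cfQ a (2*k+3):ℝ))]

end CFAux

namespace CFAux

lemma cfP_congr {a b : ℕ → ℕ} : ∀ n, (∀ i, i < n → a i = b i) → cfP a n = cfP b n
  | 0, _ => rfl
  | 1, _ => rfl
  | (n+2), h => by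
      show (a (n+1) : ℤ) * cfP a (n+1) + cfP a n = (b (n+1) : ℤ) * cfP b (n+1) + cfP b n
      rw [h (n+1) (by omega), cfP_congr (n+1) (fun i hi => h i (by omega)),
        cfP_congr n (fun i hi => h i (by omega))]

lemma cfQ_congr {a b : ℕ → ℕ} : ∀ n, (∀ i, i < n → a i = b i) → cfQ a n = cfQ b n
  | 0, _ => rfl
  | 1, _ => rfl
  | (n+2), h => by
      show (a (n+1) : ℤ) * cfQ a (n+1) + cfQ a n = (b (n+1) : ℤ) * cfQ b (n+1) + cfQ b n
      rw [h (n+1) (by omega), cfQ_congr (n+1) (fun i hi => h i (by omega)),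
        cfQ_congr n (fun i hi => h i (by omega))]

lemma cfConv_congr {a b : ℕ → ℕ} (n : ℕ) (h : ∀ i, i < n+1 → a i = b i) :
    cfConv a n = cfConv b n := by
  unfold cfConv
  rw [cfP_congr (n+1) h, cfQ_congr (n+1) h]

end CFAux

instance : MeasurableSingletonClass ℕ+ := ⟨fun _ => MeasurableSpace.measurableSet_top⟩

lemma measurable_finCoords {k : ℕ} (F : (Fin k → ℕ+) → ℝ) :
    Measurable fun ω : ℕ → ℕ+ => F (fun i => ω i) :=
  (measurable_of_countable F).comp (measurable_pi_lambda _ fun i => measurable_pi_apply _)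

lemma finAlg_measurable {k : ℕ} (F : (Fin k → ℕ+) → ℝ) :
    Measurable[finAlg k] fun ω : ℕ → ℕ+ => F (fun i => ω i) := by
  have hπ : Measurable[finAlg k] (fun (ω : ℕ → ℕ+) (i : Fin k) => ω i) :=
    fun s hs => ⟨s, hs, rfl⟩
  exact (measurable_of_countable F).comp hπ

lemma finAlg_le (k : ℕ) : finAlg k ≤ (inferInstance : MeasurableSpace (ℕ → ℕ+)) :=
  measurable_iff_comap_le.mp (measurable_pi_lambda _ fun i => measurable_pi_apply _)

lemma tailAlg_le (j : ℕ) : tailAlg j ≤ (inferInstance : MeasurableSpace (ℕ → ℕ+)) :=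
  measurable_iff_comap_le.mp (measurable_pi_lambda _ fun i => measurable_pi_apply _)

/-- the digit sequence of `ω`. -/
def aof (ω : ℕ → ℕ+) : ℕ → ℕ := fun i => (ω (i-1) : ℕ)

lemma aof_one_le (ω : ℕ → ℕ+) (i : ℕ) : 1 ≤ aof ω i := (ω (i-1)).2

lemma finAlg_measurable_cfConv (j m : ℕ) (hm : 1 ≤ m) (hjm : j ≤ m) :
    Measurable[finAlg m] fun ω => cfConv (aof ω) j := by
  have key : (fun ω : ℕ → ℕ+ => cfConv (aof ω) j)
      = fun ω => (fun v : Fin m → ℕ+ =>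
          cfConv (fun i => if h : i - 1 < m then (v ⟨i-1, h⟩ : ℕ) else 1) j)
        (fun i : Fin m => ω i) := by
    funext ω
    refine CFAux.cfConv_congr j (fun i hi => ?_)
    have hh : i - 1 < m := by omega
    rw [dif_pos hh]
    rfl
  rw [key]
  exact finAlg_measurable (fun v : Fin m → ℕ+ =>
    cfConv (fun i => if h : i - 1 < m then (v ⟨i-1, h⟩ : ℕ) else 1) j)

lemma measurable_cfConv (j : ℕ) : Measurable fun ω => cfConv (aof ω) j :=
  (finAlg_measurable_cfConv j (j+1) (by omega) (by omega)).mono (finAlg_le _) le_rfl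

/-- If `{A_n}` is ψ-mixing and `E(A_1^s) < ∞` for each `0 < s < 1`, then for
every `0 < t < 1` and every `ε > 0` there exists `N > 0` such that for every
integrable `g` measurable with respect to `σ(A_N, A_{N+1}, …)`, one has
`E(X_1^{−t} |g|) ≤ (1+ε)² E(X_1^{−t}) E(|g|)`. -/
theorem mixing_negative_moment_bound (P : Measure (ℕ → ℕ+)) [IsProbabilityMeasure P]
    (hmix : PsiMixing P)
    (hmom : ∀ s : ℝ, 0 < s → s < 1 →
      Integrable (fun ω : ℕ → ℕ+ => ((ω 0 : ℕ) : ℝ) ^ s) P)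
    (t : ℝ) (ht0 : 0 < t) (ht1 : t < 1)
    (ε : ℝ) (hε : 0 < ε) :
    ∃ N : ℕ, 0 < N ∧ ∀ g : (ℕ → ℕ+) → ℝ, Integrable g P →
      Measurable[tailAlg (N - 1)] g →
      ∫ ω, (Xtail ω 1) ^ (-t) * |g ω| ∂P ≤
        (1 + ε) ^ 2 * (∫ ω, (Xtail ω 1) ^ (-t) ∂P) * (∫ ω, |g ω| ∂P) := by
  classical
  obtain ⟨-, ψ, hψ0, hψlim, hψ⟩ := hmix
  obtain ⟨k, hk⟩ := pow_unbounded_of_one_lt ((1+ε)/ε) (by norm_num : (1:ℝ) < 4)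
  have h4k : (0:ℝ) < 4^k := by positivity
  have hεfrac : 1/(4:ℝ)^k ≤ ε/(1+ε) := by
    rw [div_le_div_iff₀ h4k (by positivity)]
    rw [div_lt_iff₀ hε] at hk
    linarith
  obtain ⟨n, hnε, hn1⟩ :=
    ((hψlim.eventually (gt_mem_nhds hε)).and (eventually_ge_atTop 1)).exists
  refine ⟨2*k+2+n, by omega, ?_⟩
  intro g hgint hgmeas
  have hXeq : ∀ ω : ℕ → ℕ+, Xtail ω 1 = cfVal (aof ω) := by
    intro ω
    unfold Xtail
    have h : (fun i => ((ω (i + 1 - 2) : ℕ+) : ℕ)) = aof ω := by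
      funext i
      have h2 : i + 1 - 2 = i - 1 := by omega
      rw [h2]
      rfl
    rw [h]
  set U : (ℕ → ℕ+) → ℝ := fun ω => max (cfConv (aof ω) (2*k+1)) (cfConv (aof ω) (2*k+2))
    with hU_def
  set L : (ℕ → ℕ+) → ℝ := fun ω => min (cfConv (aof ω) (2*k+1)) (cfConv (aof ω) (2*k+2))
    with hL_def
  have hb : ∀ ω, 1/(((ω 0 : ℕ):ℝ)+1) ≤ L ω ∧ L ω ≤ cfVal (aof ω) ∧
      cfVal (aof ω) ≤ U ω ∧ (4:ℝ)^k * (U ω - L ω) ≤ L ω :=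
    fun ω => CFAux.cf_bounds k (aof_one_le ω)
  have hω0 : ∀ ω : ℕ → ℕ+, (1:ℝ) ≤ ((ω 0 : ℕ):ℝ) := by
    intro ω
    exact_mod_cast (ω 0).2
  have hLU : ∀ ω, L ω ≤ U ω := fun ω => min_le_max
  have hL0 : ∀ ω, 0 < L ω := by
    intro ω
    have h := hω0 ω
    exact lt_of_lt_of_le (by positivity) (hb ω).1
  have hU0 : ∀ ω, 0 < U ω := fun ω => lt_of_lt_of_le (hL0 ω) (hLU ω)
  have hX0 : ∀ ω, 0 < Xtail ω 1 := by
    intro ω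
    rw [hXeq ω]
    exact lt_of_lt_of_le (hL0 ω) (hb ω).2.1
  set Y : (ℕ → ℕ+) → ℝ := fun ω => U ω ^ (-t) with hY_def
  have hY0 : ∀ ω, 0 ≤ Y ω := fun ω => Real.rpow_nonneg (hU0 ω).le _
  have hYle : ∀ ω, Y ω ≤ Xtail ω 1 ^ (-t) := by
    intro ω
    refine Real.rpow_le_rpow_of_nonpos (hX0 ω) ?_ (neg_nonpos.mpr ht0.le)
    rw [hXeq ω]
    exact (hb ω).2.2.1
  have hXle : ∀ ω, Xtail ω 1 ^ (-t) ≤ (1+ε) * Y ω := by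
    intro ω
    have h2 := (hb ω).2.2.2
    have h1 : U ω - L ω ≤ (ε/(1+ε)) * L ω := by
      have h3 : U ω - L ω ≤ L ω * (1/4^k) := by
        rw [mul_one_div, le_div_iff₀ h4k]
        linarith
      calc U ω - L ω ≤ L ω * (1/4^k) := h3
        _ ≤ L ω * (ε/(1+ε)) := mul_le_mul_of_nonneg_left hεfrac (hL0 ω).le
        _ = (ε/(1+ε)) * L ω := mul_comm _ _
    have hεε : ε/(1+ε) ≤ ε := by
      rw [div_le_iff₀ (by positivity)]
      nlinarith
    have hUL : U ω ≤ (1+ε) * L ω := by nlinarith [hL0 ω]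
    have hXlow : U ω / (1+ε) ≤ Xtail ω 1 := by
      rw [div_le_iff₀ (by positivity), hXeq ω]
      have hx := (hb ω).2.1
      nlinarith [hL0 ω, lt_of_lt_of_le (hL0 ω) (hb ω).2.1]
    have h4 : Xtail ω 1 ^ (-t) ≤ (U ω / (1+ε)) ^ (-t) :=
      Real.rpow_le_rpow_of_nonpos (div_pos (hU0 ω) (by positivity)) hXlow
        (neg_nonpos.mpr ht0.le)
    have h5 : (U ω / (1+ε)) ^ (-t) = U ω ^ (-t) * (1+ε) ^ t := by
      rw [Real.div_rpow (hU0 ω).le (by positivity : (0:ℝ) ≤ 1+ε),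
        Real.rpow_neg (by positivity : (0:ℝ) ≤ 1+ε), div_eq_mul_inv, inv_inv]
    have h6 : (1+ε) ^ t ≤ 1+ε := by
      calc (1+ε) ^ t ≤ (1+ε) ^ (1:ℝ) :=
            Real.rpow_le_rpow_of_exponent_le (by linarith) ht1.le
        _ = 1+ε := Real.rpow_one _
    calc Xtail ω 1 ^ (-t) ≤ U ω ^ (-t) * (1+ε) ^ t := h5 ▸ h4
      _ ≤ U ω ^ (-t) * (1+ε) :=
          mul_le_mul_of_nonneg_left h6 (Real.rpow_nonneg (hU0 ω).le _)
      _ = (1+ε) * Y ω := mul_comm _ _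
  have hbound : ∀ (ω : ℕ → ℕ+) (z : ℝ), 1/(((ω 0:ℕ):ℝ)+1) ≤ z →
      z ^ (-t) ≤ 2^t * ((ω 0:ℕ):ℝ)^t := by
    intro ω z hz
    have hω := hω0 ω
    have hpos : (0:ℝ) < ((ω 0:ℕ):ℝ)+1 := by linarith
    calc z ^ (-t) ≤ (1/(((ω 0:ℕ):ℝ)+1)) ^ (-t) :=
          Real.rpow_le_rpow_of_nonpos (by positivity) hz (neg_nonpos.mpr ht0.le)
      _ = (((ω 0:ℕ):ℝ)+1) ^ t := by
          rw [one_div, Real.inv_rpow hpos.le, Real.rpow_neg hpos.le, inv_inv]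
      _ ≤ (2*((ω 0:ℕ):ℝ)) ^ t := Real.rpow_le_rpow hpos.le (by linarith) ht0.le
      _ = 2^t * ((ω 0:ℕ):ℝ)^t := Real.mul_rpow (by norm_num) (by linarith)
  have hYb : ∀ ω, Y ω ≤ 2^t * ((ω 0:ℕ):ℝ)^t :=
    fun ω => hbound ω (U ω) (le_trans (hb ω).1 (hLU ω))
  have hXb : ∀ ω, Xtail ω 1 ^ (-t) ≤ 2^t * ((ω 0:ℕ):ℝ)^t := by
    intro ω
    refine hbound ω _ ?_
    rw [hXeq ω]
    exact le_trans (hb ω).1 (hb ω).2.1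
  -- measurability
  have hUmeasF : Measurable[finAlg (2*k+2)] U :=
    Measurable.max (finAlg_measurable_cfConv (2*k+1) (2*k+2) (by omega) (by omega))
      (finAlg_measurable_cfConv (2*k+2) (2*k+2) (by omega) (by omega))
  have hYmeasF : Measurable[finAlg (2*k+2)] Y := by
    have : Y = fun ω => Real.exp (Real.log (U ω) * (-t)) := by
      funext ω
      rw [hY_def]
      exact Real.rpow_def_of_pos (hU0 ω) _
    rw [this]
    exact (hUmeasF.log.mul_const _).exp
  have hYmeas : Measurable Y := hYmeasF.mono (finAlg_le _) le_rfl
  have hXmeas : Measurable (fun ω => Xtail ω 1) := by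
    apply measurable_of_tendsto_metrizable (f := fun j ω => cfConv (aof ω) j)
      (fun j => measurable_cfConv j)
    rw [tendsto_pi_nhds]
    intro ω
    rw [hXeq ω]
    exact CFAux.conv_tendsto (aof_one_le ω)
  have hXtmeas : Measurable (fun ω => Xtail ω 1 ^ (-t)) := by
    have : (fun ω => Xtail ω 1 ^ (-t)) = fun ω => Real.exp (Real.log (Xtail ω 1) * (-t)) := by
      funext ω
      exact Real.rpow_def_of_pos (hX0 ω) _
    rw [this]
    exact (hXmeas.log.mul_const _).exp
  -- integrability
  have hmomt := hmom t ht0 ht1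
  have hdom : Integrable (fun ω : ℕ → ℕ+ => 2^t * ((ω 0:ℕ):ℝ)^t) P := hmomt.const_mul _
  have hYint : Integrable Y P := by
    refine hdom.mono' hYmeas.aestronglyMeasurable (ae_of_all _ fun ω => ?_)
    rw [Real.norm_eq_abs, abs_of_nonneg (hY0 ω)]
    exact hYb ω
  have hXtint : Integrable (fun ω => Xtail ω 1 ^ (-t)) P := by
    refine hdom.mono' hXtmeas.aestronglyMeasurable (ae_of_all _ fun ω => ?_)
    rw [Real.norm_eq_abs, abs_of_nonneg (Real.rpow_nonneg (hX0 ω).le _)]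
    exact hXb ω
  have hig : 0 ≤ ∫ ω, |g ω| ∂P := integral_nonneg fun ω => abs_nonneg _
  have hiX : 0 ≤ ∫ ω, Xtail ω 1 ^ (-t) ∂P :=
    integral_nonneg fun ω => Real.rpow_nonneg (hX0 ω).le _
  by_cases hint : Integrable (fun ω => Xtail ω 1 ^ (-t) * |g ω|) P
  swap
  · rw [integral_undef hint]
    exact mul_nonneg (mul_nonneg (by positivity) hiX) hig
  · have hYgint : Integrable (fun ω => Y ω * |g ω|) P := by
      refine hint.mono' (hYmeas.aestronglyMeasurable.mul hgint.abs.aestronglyMeasurable)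
        (ae_of_all _ fun ω => ?_)
      rw [Real.norm_eq_abs, abs_mul, abs_of_nonneg (hY0 ω), abs_abs]
      exact mul_le_mul_of_nonneg_right (hYle ω) (abs_nonneg _)
    have hmixg := hψ (2*k+2) n (by omega) hn1 Y (fun ω => |g ω|) hYint hgint.abs
      hYmeasF (measurable_abs.comp hgmeas)
    have hiY : 0 ≤ ∫ ω, Y ω ∂P := integral_nonneg hY0
    have habsY : ∫ ω, |Y ω| ∂P = ∫ ω, Y ω ∂P :=
      integral_congr_ae (ae_of_all _ fun ω => abs_of_nonneg (hY0 ω))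
    have habsg : ∫ ω, |(|g ω|)| ∂P = ∫ ω, |g ω| ∂P := by simp [abs_abs]
    rw [habsY, habsg] at hmixg
    have hstep2 : ∫ ω, Y ω * |g ω| ∂P ≤ (1+ε) * ((∫ ω, Y ω ∂P) * ∫ ω, |g ω| ∂P) := by
      have h7 := (abs_le.mp hmixg).2
      nlinarith [mul_nonneg hiY hig, hnε.le, hψ0 n]
    have hstep1 : ∫ ω, Xtail ω 1 ^ (-t) * |g ω| ∂P ≤ (1+ε) * ∫ ω, Y ω * |g ω| ∂P := by
      rw [← integral_const_mul]
      refine integral_mono_of_nonneg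
        (ae_of_all _ fun ω => mul_nonneg (Real.rpow_nonneg (hX0 ω).le _) (abs_nonneg _))
        (hYgint.const_mul _) (ae_of_all _ fun ω => ?_)
      calc Xtail ω 1 ^ (-t) * |g ω| ≤ ((1+ε) * Y ω) * |g ω| :=
            mul_le_mul_of_nonneg_right (hXle ω) (abs_nonneg _)
        _ = (1+ε) * (Y ω * |g ω|) := by ring
    have hstep3 : ∫ ω, Y ω ∂P ≤ ∫ ω, Xtail ω 1 ^ (-t) ∂P :=
      integral_mono hYint hXtint hYle
    calc ∫ ω, Xtail ω 1 ^ (-t) * |g ω| ∂P ≤ (1+ε) * ∫ ω, Y ω * |g ω| ∂P := hstep1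
      _ ≤ (1+ε) * ((1+ε) * ((∫ ω, Y ω ∂P) * ∫ ω, |g ω| ∂P)) :=
          mul_le_mul_of_nonneg_left hstep2 (by positivity)
      _ = (1+ε)^2 * (∫ ω, Y ω ∂P) * ∫ ω, |g ω| ∂P := by ring
      _ ≤ (1+ε)^2 * (∫ ω, Xtail ω 1 ^ (-t) ∂P) * ∫ ω, |g ω| ∂P := by
          nlinarith [mul_le_mul_of_nonneg_right
            (mul_le_mul_of_nonneg_left hstep3 (by positivity : (0:ℝ) ≤ (1+ε)^2)) hig]
end

section
/- The function x ↦ log a_1(x) is integrable with respect to the Gauss measure μ, and ∫_{[0,1)} log a_1(x) dμ(x) = (1/log 2)·Σ_{k=1}^∞ log k · log(1 + 1/(k(k+2))) < ∞. -/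
open Filter MeasureTheory Real Topology

/-- The first partial quotient `a_1(x) = ⌊1/x⌋` (as a natural number). -/
noncomputable def pq1 (x : ℝ) : ℕ := (⌊x⁻¹⌋).toNat

/-- The Gauss measure `μ(A) = (1/log 2) ∫_A dx/(1+x)` on `[0,1)`. -/
noncomputable def gaussMeasure : Measure ℝ :=
  (ENNReal.ofReal (Real.log 2))⁻¹ •
    ((volume.restrict (Set.Ico (0 : ℝ) 1)).withDensity
      (fun x => ENNReal.ofReal (1 / (1 + x))))

namespace GaussAux

/-- The interval on which `pq1 = k + 1`. -/
def piece (k : ℕ) : Set ℝ := Set.Ioc (1 / ((k : ℝ) + 2)) (1 / ((k : ℝ) + 1))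

/-- The `k`-th term of the series (indexed from `0`, corresponding to `k+1`). -/
noncomputable def g (k : ℕ) : ℝ :=
  Real.log ((k : ℝ) + 1) * Real.log (1 + 1 / (((k : ℝ) + 1) * (((k : ℝ) + 1) + 2)))

lemma piece_pos (k : ℕ) : (0 : ℝ) < 1 / ((k : ℝ) + 2) := by positivity

lemma piece_measurable (k : ℕ) : MeasurableSet (piece k) := measurableSet_Ioc

lemma pq1_on_piece (k : ℕ) {x : ℝ} (hx : x ∈ piece k) : pq1 x = k + 1 := by
  obtain ⟨h1, h2⟩ := hx
  have hx0 : 0 < x := lt_trans (piece_pos k) h1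
  have hle : ((k : ℝ) + 1) ≤ x⁻¹ := by
    have := one_div_le_one_div_of_le hx0 h2
    rwa [one_div_one_div, one_div] at this
  have hlt : x⁻¹ < (k : ℝ) + 2 := by
    have := one_div_lt_one_div_of_lt (piece_pos k) h1
    rwa [one_div_one_div, one_div] at this
  have hfl : ⌊x⁻¹⌋ = (k : ℤ) + 1 := by
    rw [Int.floor_eq_iff]
    constructor
    · push_cast; exact hle
    · push_cast; linarith
  simp [pq1, hfl]

lemma iUnion_piece : (⋃ k, piece k) = Set.Ioc (0 : ℝ) 1 := by
  ext x
  simp only [Set.mem_iUnion, piece, Set.mem_Ioc]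
  constructor
  · rintro ⟨k, h1, h2⟩
    refine ⟨lt_trans (piece_pos k) h1, h2.trans ?_⟩
    rw [div_le_one (by positivity)]
    linarith [Nat.cast_nonneg (α := ℝ) k]
  · rintro ⟨hx0, hx1⟩
    have h1 : (1 : ℝ) ≤ x⁻¹ := by
      have := one_div_le_one_div_of_le hx0 hx1
      simpa [one_div] using this
    set n : ℤ := ⌊x⁻¹⌋ with hn
    have hn1 : 1 ≤ n := by
      exact_mod_cast Int.le_floor.mpr (by exact_mod_cast h1)
    refine ⟨(n - 1).toNat, ?_, ?_⟩
    · have hcast : (((n - 1).toNat : ℝ)) = (n : ℝ) - 1 := by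
        have : (((n - 1).toNat : ℤ) : ℝ) = ((n - 1 : ℤ) : ℝ) := by
          rw [Int.toNat_of_nonneg (by omega)]
        push_cast at this ⊢
        linarith
      rw [hcast]
      have hlt : x⁻¹ < (n : ℝ) + 1 := Int.lt_floor_add_one x⁻¹
      have hnpos : (0 : ℝ) < (n : ℝ) + 1 := by
        have : (1 : ℝ) ≤ (n : ℝ) := by exact_mod_cast hn1
        linarith
      rw [show (n : ℝ) - 1 + 2 = (n : ℝ) + 1 by ring, div_lt_iff₀ hnpos]
      have := mul_lt_mul_of_pos_left hlt hx0
      rwa [mul_inv_cancel₀ hx0.ne'] at this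
    · have hcast : (((n - 1).toNat : ℝ)) = (n : ℝ) - 1 := by
        have : (((n - 1).toNat : ℤ) : ℝ) = ((n - 1 : ℤ) : ℝ) := by
          rw [Int.toNat_of_nonneg (by omega)]
        push_cast at this ⊢
        linarith
      rw [hcast, show (n : ℝ) - 1 + 1 = (n : ℝ) by ring]
      have hnpos : (0 : ℝ) < (n : ℝ) := by
        have : (1 : ℝ) ≤ (n : ℝ) := by exact_mod_cast hn1
        linarith
      rw [le_div_iff₀ hnpos]
      have hfl : (n : ℝ) ≤ x⁻¹ := Int.floor_le x⁻¹
      have := mul_le_mul_of_nonneg_left hfl hx0.le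
      rwa [mul_inv_cancel₀ hx0.ne'] at this

lemma piece_disjoint : Pairwise (Function.onFun Disjoint piece) := by
  have key : ∀ a b : ℕ, a < b → Disjoint (piece a) (piece b) := by
    intro a b hab
    rw [piece, piece, Set.Ioc_disjoint_Ioc]
    refine le_trans (min_le_right _ _) (le_trans ?_ (le_max_left _ _))
    apply one_div_le_one_div_of_le (by positivity)
    have : (a : ℝ) + 1 ≤ (b : ℝ) := by exact_mod_cast hab
    linarith
  intro i j hij
  rcases hij.lt_or_gt with h | h
  · exact key i j h
  · exact (key j i h).symm

lemma meas_log_pq1 : Measurable (fun x : ℝ => Real.log ((pq1 x : ℝ))) := by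
  have : (fun x : ℝ => Real.log ((pq1 x : ℝ))) =
      (fun n : ℤ => Real.log ((n.toNat : ℝ))) ∘ (fun x : ℝ => ⌊x⁻¹⌋) := rfl
  rw [this]
  exact (measurable_from_top).comp (measurable_inv.floor)

lemma log_pq1_nonneg (x : ℝ) : 0 ≤ Real.log ((pq1 x : ℝ)) := by
  rcases Nat.eq_zero_or_pos (pq1 x) with h | h
  · simp [h]
  · exact Real.log_nonneg (by exact_mod_cast h)

lemma meas_w : Measurable (fun x : ℝ => ENNReal.ofReal (1 / (1 + x))) := by
  apply ENNReal.measurable_ofReal.comp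
  exact (measurable_const.div ((measurable_const.add measurable_id)))

lemma lint_piece (k : ℕ) :
    ∫⁻ x in piece k, ENNReal.ofReal (1 / (1 + x)) =
      ENNReal.ofReal (Real.log (1 + 1 / (((k : ℝ) + 1) * (((k : ℝ) + 1) + 2)))) := by
  set a : ℝ := 1 / ((k : ℝ) + 2) with ha_def
  set b : ℝ := 1 / ((k : ℝ) + 1) with hb_def
  have ha : (0 : ℝ) < a := piece_pos k
  have hb : (0 : ℝ) < b := by rw [hb_def]; positivity
  have hab : a ≤ b := by
    rw [ha_def, hb_def]
    apply one_div_le_one_div_of_le (by positivity)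
    linarith
  have hcont : ContinuousOn (fun x : ℝ => 1 / (1 + x)) (Set.Icc a b) := by
    apply ContinuousOn.div continuousOn_const
    · exact (continuous_const.add continuous_id).continuousOn
    · intro x hx
      have := hx.1
      nlinarith [ha]
  have hint : IntegrableOn (fun x : ℝ => 1 / (1 + x)) (piece k) :=
    (hcont.integrableOn_Icc).mono_set Set.Ioc_subset_Icc_self
  have hnn : 0 ≤ᵐ[volume.restrict (piece k)] fun x : ℝ => 1 / (1 + x) := by
    filter_upwards [ae_restrict_mem (piece_measurable k)] with x hx
    have h1 := hx.1
    have : (0 : ℝ) < 1 + x := by nlinarith [ha]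
    positivity
  rw [← ofReal_integral_eq_lintegral_ofReal hint hnn]
  congr 1
  have hset : ∫ x in piece k, 1 / (1 + x) = ∫ x in a..b, 1 / (1 + x) := by
    rw [intervalIntegral.integral_of_le hab, ha_def, hb_def]
    simp only [piece]
  have hd : ∀ x ∈ Set.uIcc a b, HasDerivAt (fun y : ℝ => Real.log (1 + y)) (1 / (1 + x)) x := by
    intro x hx
    rw [Set.uIcc_of_le hab] at hx
    have hpos : (0 : ℝ) < 1 + x := by nlinarith [hx.1]
    have h := (Real.hasDerivAt_log hpos.ne').comp x
      ((hasDerivAt_const x (1 : ℝ)).add (hasDerivAt_id x))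
    simpa [Function.comp_def, one_div] using h
  have hlint : IntervalIntegrable (fun x : ℝ => 1 / (1 + x)) volume a b := by
    apply ContinuousOn.intervalIntegrable
    rwa [Set.uIcc_of_le hab]
  rw [hset, intervalIntegral.integral_eq_sub_of_hasDerivAt hd hlint]
  have h1a : (0 : ℝ) < 1 + a := by linarith
  have h1b : (0 : ℝ) < 1 + b := by linarith
  rw [← Real.log_div h1b.ne' h1a.ne']
  congr 1
  have h1 : ((k : ℝ) + 1) ≠ 0 := by positivity
  have h2 : ((k : ℝ) + 2) ≠ 0 := by positivity
  have h3 : ((k : ℝ) + 3) ≠ 0 := by positivity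
  rw [ha_def, hb_def]
  field_simp
  ring

lemma g_nonneg (k : ℕ) : 0 ≤ g k := by
  apply mul_nonneg
  · exact Real.log_nonneg (by linarith [Nat.cast_nonneg (α := ℝ) k])
  · exact Real.log_nonneg (le_add_of_nonneg_right (by positivity))

lemma summable_g : Summable g := by
  have hmaj : Summable (fun k : ℕ => 2 * ((k : ℝ) + 1) ^ (-(3 / 2) : ℝ)) := by
    have h0 : Summable (fun k : ℕ => ((k : ℝ)) ^ (-(3 / 2) : ℝ)) :=
      Real.summable_nat_rpow.mpr (by norm_num)
    have h1 : Summable (fun k : ℕ => (((k + 1 : ℕ) : ℝ)) ^ (-(3 / 2) : ℝ)) :=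
      (summable_nat_add_iff 1).mpr h0
    have h2 : Summable (fun k : ℕ => (((k : ℝ) + 1)) ^ (-(3 / 2) : ℝ)) := by
      convert h1 using 2 with k
      push_cast
      ring
    exact h2.mul_left 2
  apply Summable.of_nonneg_of_le g_nonneg ?_ hmaj
  intro k
  set K : ℝ := (k : ℝ) + 1 with hK
  have hK1 : (1 : ℝ) ≤ K := by
    rw [hK]
    linarith [(Nat.cast_nonneg k : (0:ℝ) ≤ (k:ℝ))]
  have hKpos : (0 : ℝ) < K := by linarith
  have hlog1 : Real.log K ≤ 2 * Real.sqrt K := by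
    have hs : Real.log (Real.sqrt K) ≤ Real.sqrt K - 1 :=
      Real.log_le_sub_one_of_pos (Real.sqrt_pos.mpr hKpos)
    have : Real.log K = 2 * Real.log (Real.sqrt K) := by
      rw [Real.log_sqrt hKpos.le]; ring
    nlinarith [Real.sqrt_nonneg K]
  have hlog2 : Real.log (1 + 1 / (K * (K + 2))) ≤ 1 / K ^ 2 := by
    have hy : (0 : ℝ) < K * (K + 2) := by nlinarith
    have h1 : Real.log (1 + 1 / (K * (K + 2))) ≤ 1 / (K * (K + 2)) := by
      have := Real.log_le_sub_one_of_pos (show (0:ℝ) < 1 + 1 / (K * (K + 2)) by positivity)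
      linarith
    have h2 : 1 / (K * (K + 2)) ≤ 1 / K ^ 2 := by
      apply one_div_le_one_div_of_le (by positivity)
      nlinarith
    linarith
  calc Real.log K * Real.log (1 + 1 / (K * (K + 2)))
      ≤ (2 * Real.sqrt K) * (1 / K ^ 2) := by
        apply mul_le_mul hlog1 hlog2
        · exact Real.log_nonneg (le_add_of_nonneg_right (by positivity))
        · positivity
    _ = 2 * (K ^ ((1 : ℝ) / 2) * (K ^ ((2 : ℝ)))⁻¹) := by
        rw [← Real.rpow_natCast K 2, Real.sqrt_eq_rpow]
        push_cast
        ring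
    _ = 2 * K ^ (-(3 / 2) : ℝ) := by
        rw [← Real.rpow_neg hKpos.le, ← Real.rpow_add hKpos]
        norm_num

lemma pnat_term_eq (n : ℕ) :
    Real.log (((Equiv.pnatEquivNat.symm n : ℕ+) : ℕ) : ℝ) *
      Real.log (1 + 1 / ((((Equiv.pnatEquivNat.symm n : ℕ+) : ℕ) : ℝ) *
        ((((Equiv.pnatEquivNat.symm n : ℕ+) : ℕ) : ℝ) + 2))) = g n := by
  have h : (((Equiv.pnatEquivNat.symm n : ℕ+) : ℕ) : ℝ) = (n : ℝ) + 1 := by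
    simp [Equiv.pnatEquivNat, Nat.succPNat]
  rw [g, h]

lemma summable_pnat : Summable (fun k : ℕ+ =>
    Real.log ((k : ℕ) : ℝ) *
      Real.log (1 + 1 / (((k : ℕ) : ℝ) * (((k : ℕ) : ℝ) + 2)))) := by
  rw [← Equiv.summable_iff Equiv.pnatEquivNat.symm]
  exact summable_g.congr fun n => (pnat_term_eq n).symm

lemma tsum_pnat_eq : (∑' k : ℕ+,
    Real.log ((k : ℕ) : ℝ) *
      Real.log (1 + 1 / (((k : ℕ) : ℝ) * (((k : ℕ) : ℝ) + 2)))) = ∑' n : ℕ, g n := by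
  rw [← Equiv.tsum_eq Equiv.pnatEquivNat.symm]
  exact tsum_congr pnat_term_eq

lemma key_lintegral :
    ∫⁻ x, ENNReal.ofReal (Real.log ((pq1 x : ℝ))) ∂gaussMeasure =
      (ENNReal.ofReal (Real.log 2))⁻¹ * ENNReal.ofReal (∑' n : ℕ, g n) := by
  rw [gaussMeasure, lintegral_smul_measure]
  congr 1
  have hg : Measurable fun x : ℝ => ENNReal.ofReal (Real.log ((pq1 x : ℝ))) :=
    ENNReal.measurable_ofReal.comp meas_log_pq1
  rw [lintegral_withDensity_eq_lintegral_mul _ meas_w hg]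
  have hres : (volume : Measure ℝ).restrict (Set.Ico (0 : ℝ) 1) =
      (volume : Measure ℝ).restrict (Set.Ioc (0 : ℝ) 1) :=
    Measure.restrict_congr_set Ico_ae_eq_Ioc
  rw [show (∫⁻ x, ((fun x : ℝ => ENNReal.ofReal (1 / (1 + x))) *
        fun x : ℝ => ENNReal.ofReal (Real.log ((pq1 x : ℝ)))) x
        ∂(volume.restrict (Set.Ico (0 : ℝ) 1))) =
      ∫⁻ x in Set.Ioc (0 : ℝ) 1, ENNReal.ofReal (1 / (1 + x)) *
        ENNReal.ofReal (Real.log ((pq1 x : ℝ))) ∂volume from by rw [← hres]; rfl]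
  rw [← iUnion_piece, lintegral_iUnion piece_measurable piece_disjoint]
  rw [ENNReal.ofReal_tsum_of_nonneg g_nonneg summable_g]
  apply tsum_congr
  intro k
  have hcongr : ∫⁻ x in piece k, ENNReal.ofReal (1 / (1 + x)) *
        ENNReal.ofReal (Real.log ((pq1 x : ℝ))) =
      ∫⁻ x in piece k, ENNReal.ofReal (1 / (1 + x)) *
        ENNReal.ofReal (Real.log (((k : ℝ) + 1))) := by
    apply setLIntegral_congr_fun (piece_measurable k)
    intro x hx
    beta_reduce
    rw [pq1_on_piece k hx]
    push_cast
    ring_nf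
  rw [hcongr, lintegral_mul_const _ meas_w, lint_piece k, g,
    ← ENNReal.ofReal_mul (Real.log_nonneg (le_add_of_nonneg_right (by positivity)))]
  rw [mul_comm]

end GaussAux

open GaussAux in
/-- The function `x ↦ log a_1(x)` is integrable with respect to the Gauss
measure `μ`, and
`∫ log a_1 dμ = (1/log 2) ∑_{k=1}^∞ log k · log(1 + 1/(k(k+2))) < ∞`
(finiteness being the summability of the series). -/
theorem log_partial_quotient_integrable :
    Integrable (fun x : ℝ => Real.log ((pq1 x : ℝ))) gaussMeasure ∧
    Summable (fun k : ℕ+ =>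
      Real.log ((k : ℕ) : ℝ) *
        Real.log (1 + 1 / (((k : ℕ) : ℝ) * (((k : ℕ) : ℝ) + 2)))) ∧
    ∫ x, Real.log ((pq1 x : ℝ)) ∂gaussMeasure =
      (1 / Real.log 2) * ∑' k : ℕ+,
        Real.log ((k : ℕ) : ℝ) *
          Real.log (1 + 1 / (((k : ℕ) : ℝ) * (((k : ℕ) : ℝ) + 2))) := by
  have hnn : 0 ≤ᵐ[gaussMeasure] fun x : ℝ => Real.log ((pq1 x : ℝ)) :=
    ae_of_all _ log_pq1_nonneg
  have hmeas := meas_log_pq1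
  have hint : Integrable (fun x : ℝ => Real.log ((pq1 x : ℝ))) gaussMeasure := by
    refine ⟨hmeas.aestronglyMeasurable, ?_⟩
    rw [hasFiniteIntegral_iff_ofReal hnn, key_lintegral]
    apply ENNReal.mul_lt_top
    · rw [lt_top_iff_ne_top, ENNReal.inv_ne_top]
      exact (ENNReal.ofReal_pos.mpr (Real.log_pos one_lt_two)).ne'
    · exact ENNReal.ofReal_lt_top
  refine ⟨hint, summable_pnat, ?_⟩
  rw [integral_eq_lintegral_of_nonneg_ae hnn hmeas.aestronglyMeasurable, key_lintegral,
    ENNReal.toReal_mul, ENNReal.toReal_inv,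
    ENNReal.toReal_ofReal (Real.log_nonneg one_le_two),
    ENNReal.toReal_ofReal (tsum_nonneg g_nonneg), tsum_pnat_eq, one_div]
end
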